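/- arXiv:math/0512563 — 7 statements merged into one kernel-verified Lean document; each statement's English description precedes it below -/
import Mathlib

section
/- Assume q is not a root of unity. If λ² ≠ q^{2n} for every integer n ≥ 0 (equivalently, λ ≠ qⁿ and λ ≠ −qⁿ for all n ≥ 0), then M_w(λ) is a simple D_q-module: its only D_q-submodules are 0 and M_w(λ). -/
noncomputable section

/-- Generators of the quantum double `D_q`. -/
inductive DGen : Type
  | E | F | K | Kinv | Kt | Ktinv
  deriving DecidableEq

/-- The defining relations of `D_q`. -/
inductive DRel (k : Type) [Field k] (q : k) :
    FreeAlgebra k DGen → FreeAlgebra k DGen → Prop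
  | KE : DRel k q (FreeAlgebra.ι k DGen.K * FreeAlgebra.ι k DGen.E)
      ((q ^ 2) • (FreeAlgebra.ι k DGen.E * FreeAlgebra.ι k DGen.K))
  | KF : DRel k q (FreeAlgebra.ι k DGen.K * FreeAlgebra.ι k DGen.F)
      (((q ^ 2)⁻¹) • (FreeAlgebra.ι k DGen.F * FreeAlgebra.ι k DGen.K))
  | KtE : DRel k q (FreeAlgebra.ι k DGen.Kt * FreeAlgebra.ι k DGen.E)
      ((q ^ 2) • (FreeAlgebra.ι k DGen.E * FreeAlgebra.ι k DGen.Kt))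
  | KtF : DRel k q (FreeAlgebra.ι k DGen.Kt * FreeAlgebra.ι k DGen.F)
      (((q ^ 2)⁻¹) • (FreeAlgebra.ι k DGen.F * FreeAlgebra.ι k DGen.Kt))
  | KKinv : DRel k q (FreeAlgebra.ι k DGen.K * FreeAlgebra.ι k DGen.Kinv) 1
  | KinvK : DRel k q (FreeAlgebra.ι k DGen.Kinv * FreeAlgebra.ι k DGen.K) 1
  | KtKtinv : DRel k q (FreeAlgebra.ι k DGen.Kt * FreeAlgebra.ι k DGen.Ktinv) 1
  | KtinvKt : DRel k q (FreeAlgebra.ι k DGen.Ktinv * FreeAlgebra.ι k DGen.Kt) 1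
  | KKt : DRel k q (FreeAlgebra.ι k DGen.K * FreeAlgebra.ι k DGen.Kt)
      (FreeAlgebra.ι k DGen.Kt * FreeAlgebra.ι k DGen.K)
  | EF : DRel k q (FreeAlgebra.ι k DGen.E * FreeAlgebra.ι k DGen.F)
      (FreeAlgebra.ι k DGen.F * FreeAlgebra.ι k DGen.E +
        ((q - q⁻¹)⁻¹) • (FreeAlgebra.ι k DGen.K - FreeAlgebra.ι k DGen.Ktinv))

/-- The quantum double `D_q` of `U_q(sl2)^{≤0}`, presented by generators and relations. -/
abbrev Dq (k : Type) [Field k] (q : k) := RingQuot (DRel k q)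

def DE (k : Type) [Field k] (q : k) : Dq k q :=
  RingQuot.mkAlgHom k (DRel k q) (FreeAlgebra.ι k DGen.E)
def DF (k : Type) [Field k] (q : k) : Dq k q :=
  RingQuot.mkAlgHom k (DRel k q) (FreeAlgebra.ι k DGen.F)
def DK (k : Type) [Field k] (q : k) : Dq k q :=
  RingQuot.mkAlgHom k (DRel k q) (FreeAlgebra.ι k DGen.K)
def DKinv (k : Type) [Field k] (q : k) : Dq k q :=
  RingQuot.mkAlgHom k (DRel k q) (FreeAlgebra.ι k DGen.Kinv)
def DKt (k : Type) [Field k] (q : k) : Dq k q :=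
  RingQuot.mkAlgHom k (DRel k q) (FreeAlgebra.ι k DGen.Kt)
def DKtinv (k : Type) [Field k] (q : k) : Dq k q :=
  RingQuot.mkAlgHom k (DRel k q) (FreeAlgebra.ι k DGen.Ktinv)

/-- The quantum integer `[n]_q = (qⁿ - q⁻ⁿ)/(q - q⁻¹)`. -/
def qint (k : Type) [Field k] (q : k) (n : ℕ) : k := (q ^ n - q⁻¹ ^ n) / (q - q⁻¹)

/-- The quantum factorial `[n]_q!`. -/
def qfact (k : Type) [Field k] (q : k) : ℕ → k
  | 0 => 1
  | n + 1 => qfact k q n * qint k q (n + 1)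

/-- The Gaussian binomial coefficient `[m choose n]_q`. -/
def qbinom (k : Type) [Field k] (q : k) (m n : ℕ) : k :=
  qfact k q m / (qfact k q n * qfact k q (m - n))

/-- The element `[K,K̃;c;t] = ∏_{s=1}^t (K q^{c-s+1} - K̃⁻¹ q^{-c+s-1})/(q^s - q^{-s})` of `D_q`. -/
def KKtc (k : Type) [Field k] (q : k) (c : ℤ) : ℕ → Dq k q
  | 0 => 1
  | t + 1 =>
      KKtc k q c t *
        ((q ^ ((t : ℤ) + 1) - q ^ (-((t : ℤ) + 1)))⁻¹ •
          (q ^ (c - (t : ℤ)) • DK k q - q ^ ((t : ℤ) - c) • DKtinv k q))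

/-- Action of `K` on the Verma module `M_w(λ)`: `K·m_i = wλq^{−2i}·m_i`. -/
def vK (k : Type) [Field k] (q w lam : k) : (ℕ →₀ k) →ₗ[k] (ℕ →₀ k) :=
  Finsupp.lift (ℕ →₀ k) k ℕ fun i =>
    (w * lam * q ^ (-(2 * (i : ℤ)))) • Finsupp.single i 1

/-- Action of `K⁻¹` on `M_w(λ)` (the inverse operator of `vK`). -/
def vKinv (k : Type) [Field k] (q w lam : k) : (ℕ →₀ k) →ₗ[k] (ℕ →₀ k) :=
  Finsupp.lift (ℕ →₀ k) k ℕ fun i =>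
    ((w * lam * q ^ (-(2 * (i : ℤ))))⁻¹) • Finsupp.single i 1

/-- Action of `K̃` on `M_w(λ)`: `K̃·m_i = w⁻¹λq^{−2i}·m_i`. -/
def vKt (k : Type) [Field k] (q w lam : k) : (ℕ →₀ k) →ₗ[k] (ℕ →₀ k) :=
  Finsupp.lift (ℕ →₀ k) k ℕ fun i =>
    (w⁻¹ * lam * q ^ (-(2 * (i : ℤ)))) • Finsupp.single i 1

/-- Action of `K̃⁻¹` on `M_w(λ)` (the inverse operator of `vKt`). -/
def vKtinv (k : Type) [Field k] (q w lam : k) : (ℕ →₀ k) →ₗ[k] (ℕ →₀ k) :=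
  Finsupp.lift (ℕ →₀ k) k ℕ fun i =>
    ((w⁻¹ * lam * q ^ (-(2 * (i : ℤ))))⁻¹) • Finsupp.single i 1

/-- Action of `F` on `M_w(λ)`: `F·m_i = m_{i+1}`. -/
def vF (k : Type) [Field k] : (ℕ →₀ k) →ₗ[k] (ℕ →₀ k) :=
  Finsupp.lift (ℕ →₀ k) k ℕ fun i => Finsupp.single (i + 1) 1

/-- Action of `E` on `M_w(λ)`: `E·m_0 = 0` and
`E·m_i = [i]_q·w·(λq^{1−i} − λ⁻¹q^{i−1})/(q − q⁻¹)·m_{i−1}` for `i ≥ 1`. -/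
def vE (k : Type) [Field k] (q w lam : k) : (ℕ →₀ k) →ₗ[k] (ℕ →₀ k) :=
  Finsupp.lift (ℕ →₀ k) k ℕ fun i =>
    if i = 0 then 0
    else
      (qint k q i * w * (lam * q ^ (1 - (i : ℤ)) - lam⁻¹ * q ^ ((i : ℤ) - 1)) / (q - q⁻¹)) •
        Finsupp.single (i - 1) 1

/-- `ρ` realizes the Verma module `M_w(λ)` on `ℕ →₀ k`. -/
def VermaCond (k : Type) [Field k] (q w lam : k)
    (ρ : Dq k q →ₐ[k] Module.End k (ℕ →₀ k)) : Prop :=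
  ρ (DE k q) = vE k q w lam ∧ ρ (DF k q) = vF k ∧
  ρ (DK k q) = vK k q w lam ∧ ρ (DKinv k q) = vKinv k q w lam ∧
  ρ (DKt k q) = vKt k q w lam ∧ ρ (DKtinv k q) = vKtinv k q w lam


/-- The coefficient of `E` acting on `m_i`. -/
def Cc (k : Type) [Field k] (q w lam : k) (i : ℕ) : k :=
  qint k q i * w * (lam * q ^ (1 - (i : ℤ)) - lam⁻¹ * q ^ ((i : ℤ) - 1)) / (q - q⁻¹)

lemma vE_apply (k : Type) [Field k] (q w lam : k) (v : ℕ →₀ k) (j : ℕ) :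
    vE k q w lam v j = v (j + 1) * Cc k q w lam (j + 1) := by
  induction v using Finsupp.induction_linear with
  | zero => simp [vE]
  | add f g hf hg => simp [map_add, hf, hg, add_mul]
  | single a b =>
    simp only [vE, Cc, Finsupp.lift_apply, Finsupp.sum_single_index, zero_smul]
    rcases a with _ | m
    · simp [Finsupp.single_apply]
    · by_cases h : m = j
      · subst h
        simp [Finsupp.single_apply, Finsupp.smul_apply, mul_comm]
      · simp [Finsupp.single_apply, Finsupp.smul_apply, h, Ne.symm h,
          (by omega : ¬ m + 1 = j + 1)]

lemma vF_single (k : Type) [Field k] (i : ℕ) :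
    vF k (Finsupp.single i (1 : k)) = Finsupp.single (i + 1) 1 := by
  simp [vF, Finsupp.lift_apply, Finsupp.sum_single_index]

lemma Cc_ne (k : Type) [Field k] (q w lam : k)
    (hq0 : q ≠ 0) (hq : ∀ n : ℕ, 0 < n → q ^ n ≠ 1) (hw : w ≠ 0) (hlam : lam ≠ 0)
    (hgen : ∀ n : ℕ, lam ^ 2 ≠ q ^ (2 * n)) (i : ℕ) :
    Cc k q w lam (i + 1) ≠ 0 := by
  have hqq : q - q⁻¹ ≠ 0 := by
    rw [sub_ne_zero]
    intro h
    apply hq 2 (by norm_num)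
    rw [pow_two]
    nth_rewrite 2 [h]
    field_simp
  have hqint : qint k q (i + 1) ≠ 0 := by
    rw [qint, div_ne_zero_iff]
    refine ⟨?_, hqq⟩
    rw [sub_ne_zero]
    intro h
    apply hq (2 * (i + 1)) (by omega)
    rw [two_mul, pow_add]
    nth_rewrite 2 [h]
    rw [← mul_pow]
    simp [hq0]
  have hlamf : lam * q ^ (1 - ((i : ℤ) + 1)) - lam⁻¹ * q ^ (((i : ℤ) + 1) - 1) ≠ 0 := by
    have h1 : (1 : ℤ) - ((i : ℤ) + 1) = -(i : ℤ) := by ring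
    have h2 : ((i : ℤ) + 1) - 1 = (i : ℤ) := by ring
    rw [h1, h2, sub_ne_zero]
    intro h
    apply hgen i
    have hz : (q : k) ^ (i : ℤ) ≠ 0 := zpow_ne_zero _ hq0
    rw [zpow_neg] at h
    field_simp at h
    rw [h, zpow_natCast, ← pow_mul, mul_comm]
  rw [Cc, div_ne_zero_iff]
  refine ⟨?_, hqq⟩
  push_cast
  exact mul_ne_zero (mul_ne_zero hqint hw) hlamf

/-- if `q` is not a root of unity and `λ² ≠ q^{2n}` for all `n ≥ 0`,
then the Verma module `M_w(λ)` is a simple `D_q`-module: its only invariant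
subspaces are `0` and the whole space. -/
theorem verma_simple (k : Type) [Field k] (q w lam : k)
    (hq0 : q ≠ 0) (hq : ∀ n : ℕ, 0 < n → q ^ n ≠ 1) (hw : w ≠ 0) (hlam : lam ≠ 0)
    (hgen : ∀ n : ℕ, lam ^ 2 ≠ q ^ (2 * n))
    (ρ : Dq k q →ₐ[k] Module.End k (ℕ →₀ k)) (hρ : VermaCond k q w lam ρ)
    (W : Submodule k (ℕ →₀ k)) (hW : ∀ (x : Dq k q), ∀ v ∈ W, ρ x v ∈ W) :
    W = ⊥ ∨ W = ⊤ := by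
  by_cases hbot : W = ⊥
  · exact Or.inl hbot
  right
  obtain ⟨hE, hF, -, -, -, -⟩ := hρ
  have hEW : ∀ v ∈ W, vE k q w lam v ∈ W := fun v hv => hE ▸ hW (DE k q) v hv
  have hFW : ∀ v ∈ W, vF k v ∈ W := fun v hv => hF ▸ hW (DF k q) v hv
  have hC : ∀ i : ℕ, Cc k q w lam (i + 1) ≠ 0 := Cc_ne k q w lam hq0 hq hw hlam hgen
  -- from any nonzero element of W, `single 0 1 ∈ W`
  have key : ∀ n : ℕ, ∀ v ∈ W, v ≠ 0 → (∀ j, n < j → v j = 0) →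
      Finsupp.single 0 (1 : k) ∈ W := by
    intro n
    induction n with
    | zero =>
      intro v hv hv0 hsup
      have h0 : v 0 ≠ 0 := by
        intro h
        apply hv0
        ext j
        rcases Nat.eq_zero_or_pos j with rfl | hj
        · simpa using h
        · simpa using hsup j hj
      have : (v 0)⁻¹ • v = Finsupp.single 0 (1 : k) := by
        ext j
        rcases Nat.eq_zero_or_pos j with rfl | hj
        · simp [inv_mul_cancel₀ h0]
        · simp [hsup j hj, Finsupp.single_apply, hj.ne]
      rw [← this]
      exact W.smul_mem _ hv
    | succ n ih =>
      intro v hv hv0 hsup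
      by_cases h : v (n + 1) = 0
      · refine ih v hv hv0 fun j hj => ?_
        rcases Nat.lt_or_ge (n + 1) j with hj' | hj'
        · exact hsup j hj'
        · have : j = n + 1 := le_antisymm hj' hj
          rw [this]; exact h
      · refine ih (vE k q w lam v) (hEW v hv) ?_ fun j hj => ?_
        · intro h0
          apply h
          have := congrArg (fun f : ℕ →₀ k => f n) h0
          simp only [vE_apply, Finsupp.coe_zero, Pi.zero_apply] at this
          exact (mul_eq_zero.mp this).resolve_right (hC n)
        · rw [vE_apply, hsup (j + 1) (by omega), zero_mul]
  -- W contains a nonzero element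
  obtain ⟨v, hvW, hv0⟩ := Submodule.exists_mem_ne_zero_of_ne_bot hbot
  have h0 : Finsupp.single 0 (1 : k) ∈ W := by
    refine key (v.support.sup id) v hvW hv0 fun j hj => ?_
    by_contra h
    have := Finset.le_sup (f := id) (Finsupp.mem_support_iff.mpr h)
    simp only [id] at this
    omega
  have hall : ∀ i, Finsupp.single i (1 : k) ∈ W := by
    intro i
    induction i with
    | zero => exact h0
    | succ i ih =>
      have := hFW _ ih
      rwa [vF_single] at this
  rw [eq_top_iff]
  intro v hv
  clear hv
  induction v using Finsupp.induction with
  | zero => exact W.zero_mem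
  | single_add a b f _ _ ihf =>
    refine W.add_mem ?_ ihf
    have := W.smul_mem b (hall a)
    rwa [Finsupp.smul_single, smul_eq_mul, mul_one] at this
end
end

section
/- Assume q is not a root of unity and λ = qⁿ or λ = −qⁿ for some integer n ≥ 0. Then the subspace W := span_k{m_i : i ≥ n+1} is a D_q-submodule of M_w(λ); every proper D_q-submodule of M_w(λ) is contained in W (so W is the unique maximal proper submodule); W is isomorphic as a D_q-module to M_w(q^{−2(n+1)}λ); and the quotient M_w(λ)/W is a simple D_q-module of k-dimension n+1. -/
noncomputable section

namespace VermaAux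

variable {k : Type} [Field k]

lemma lift_single (g : ℕ → (ℕ →₀ k)) (i : ℕ) (c : k) :
    (Finsupp.lift (ℕ →₀ k) k ℕ g) (Finsupp.single i c) = c • g i := by
  simp [Finsupp.lift_apply, Finsupp.sum_single_index]

lemma vK_single (q w lam : k) (i : ℕ) (c : k) :
    vK k q w lam (Finsupp.single i c)
      = (w * lam * q ^ (-(2 * (i : ℤ)))) • Finsupp.single i c := by
  rw [vK, lift_single, smul_comm]
  simp [Finsupp.smul_single]

lemma vK_apply (q w lam : k) (v : ℕ →₀ k) (j : ℕ) :
    (vK k q w lam v) j = (w * lam * q ^ (-(2 * (j : ℤ)))) * v j := by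
  induction v using Finsupp.induction with
  | zero => simp
  | single_add a b f ha hb ih =>
      rw [map_add, Finsupp.add_apply, ih, vK_single, Finsupp.smul_apply,
        Finsupp.add_apply, Finsupp.single_apply]
      by_cases h : a = j <;> simp [h, mul_add]

lemma vF_single (i : ℕ) (c : k) :
    vF k (Finsupp.single i c) = Finsupp.single (i + 1) c := by
  rw [vF, lift_single]; simp [Finsupp.smul_single]

def eScal (q w lam : k) (i : ℕ) : k :=
  qint k q i * w * (lam * q ^ (1 - (i : ℤ)) - lam⁻¹ * q ^ ((i : ℤ) - 1)) / (q - q⁻¹)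

lemma vE_single_zero (q w lam : k) (c : k) :
    vE k q w lam (Finsupp.single 0 c) = 0 := by
  rw [vE, lift_single]; simp

lemma vE_single (q w lam : k) (i : ℕ) (c : k) (hi : i ≠ 0) :
    vE k q w lam (Finsupp.single i c) = (eScal q w lam i) • Finsupp.single (i - 1) c := by
  rw [vE, lift_single]
  simp only [hi, if_false, eScal]
  rw [smul_comm]
  simp [Finsupp.smul_single]


lemma vKinv_single (q w lam : k) (i : ℕ) (c : k) :
    vKinv k q w lam (Finsupp.single i c)
      = ((w * lam * q ^ (-(2 * (i : ℤ))))⁻¹) • Finsupp.single i c := by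
  rw [vKinv, lift_single, smul_comm]
  simp [Finsupp.smul_single]

lemma vKt_single (q w lam : k) (i : ℕ) (c : k) :
    vKt k q w lam (Finsupp.single i c)
      = (w⁻¹ * lam * q ^ (-(2 * (i : ℤ)))) • Finsupp.single i c := by
  rw [vKt, lift_single, smul_comm]
  simp [Finsupp.smul_single]

lemma vKtinv_single (q w lam : k) (i : ℕ) (c : k) :
    vKtinv k q w lam (Finsupp.single i c)
      = ((w⁻¹ * lam * q ^ (-(2 * (i : ℤ))))⁻¹) • Finsupp.single i c := by
  rw [vKtinv, lift_single, smul_comm]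
  simp [Finsupp.smul_single]

/-- Induction principle for `Dq`. -/
lemma Dq.induction {q : k} {P : Dq k q → Prop}
    (halg : ∀ c : k, P (algebraMap k (Dq k q) c))
    (hE : P (DE k q)) (hF : P (DF k q)) (hK : P (DK k q)) (hKinv : P (DKinv k q))
    (hKt : P (DKt k q)) (hKtinv : P (DKtinv k q))
    (hmul : ∀ a b, P a → P b → P (a * b))
    (hadd : ∀ a b, P a → P b → P (a + b)) :
    ∀ x : Dq k q, P x := by
  intro x
  obtain ⟨y, rfl⟩ := RingQuot.mkAlgHom_surjective k (DRel k q) x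
  induction y using FreeAlgebra.induction with
  | grade0 c => rw [AlgHom.commutes]; exact halg c
  | grade1 g => cases g <;> assumption
  | mul a b ha hb => rw [map_mul]; exact hmul _ _ ha hb
  | add a b ha hb => rw [map_add]; exact hadd _ _ ha hb

section RootOfUnity
variable {q : k} (hq0 : q ≠ 0) (hq : ∀ m : ℕ, 0 < m → q ^ m ≠ 1)

include hq0 hq in
lemma zpow_ne_one : ∀ m : ℤ, m ≠ 0 → q ^ m ≠ 1 := by
  intro m hm
  rcases lt_trichotomy m 0 with h | h | h
  · intro hcon
    have : q ^ (-m) ≠ 1 := by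
      have := hq (-m).toNat (by omega)
      rwa [← zpow_natCast, Int.toNat_of_nonneg (by omega)] at this
    rw [zpow_neg, hcon, inv_one] at this
    exact this rfl
  · exact absurd h hm
  · have := hq m.toNat (by omega)
    rwa [← zpow_natCast, Int.toNat_of_nonneg (by omega)] at this

include hq0 hq in
lemma zpow_injective : Function.Injective fun m : ℤ => q ^ m := by
  intro a b hab
  by_contra hne
  have : q ^ (a - b) = 1 := by
    simp only [] at hab
    rw [zpow_sub₀ hq0, hab, div_self (zpow_ne_zero _ hq0)]
  exact zpow_ne_one hq0 hq (a - b) (by omega) this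

include hq0 hq in
lemma q_sub_qinv_ne : q - q⁻¹ ≠ 0 := by
  intro h
  have h2 : q ^ 2 = 1 := by
    have hqq : q = q⁻¹ := sub_eq_zero.mp h
    rw [pow_two]
    nth_rewrite 2 [hqq]
    exact mul_inv_cancel₀ hq0
  exact hq 2 (by norm_num) h2

include hq0 hq in
lemma qint_ne_zero (i : ℕ) (hi : 0 < i) : qint k q i ≠ 0 := by
  rw [qint, div_ne_zero_iff]
  refine ⟨?_, q_sub_qinv_ne hq0 hq⟩
  intro h
  have : q ^ (i : ℤ) = q ^ (-(i : ℤ)) := by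
    rw [zpow_neg, zpow_natCast, ← inv_pow]
    exact sub_eq_zero.mp h
  have := zpow_injective hq0 hq this
  omega

end RootOfUnity


/-- A submodule invariant under a diagonal operator with injective eigenvalues contains
the basis vectors corresponding to the support of each of its elements. -/
lemma eigen_sep (W' : Submodule k (ℕ →₀ k)) (μ : ℕ → k) (hμ : Function.Injective μ)
    (T : (ℕ →₀ k) →ₗ[k] (ℕ →₀ k)) (hT : ∀ (v : ℕ →₀ k) (j : ℕ), (T v) j = μ j * v j)
    (hW : ∀ v ∈ W', T v ∈ W') :
    ∀ v ∈ W', ∀ i ∈ v.support, Finsupp.single i (1 : k) ∈ W' := by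
  suffices h : ∀ N : ℕ, ∀ v : ℕ →₀ k, v.support.card ≤ N → v ∈ W' →
      ∀ i ∈ v.support, Finsupp.single i (1 : k) ∈ W' by
    intro v hv i hi; exact h v.support.card v le_rfl hv i hi
  intro N
  induction N with
  | zero =>
      intro v hcard hv i hi
      rw [Nat.le_zero, Finset.card_eq_zero] at hcard
      rw [hcard] at hi; exact absurd hi (Finset.notMem_empty i)
  | succ N ih =>
      intro v hcard hv i hi
      have hvi : v i ≠ 0 := Finsupp.mem_support_iff.mp hi
      set v' : ℕ →₀ k := T v - μ i • v with hv'def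
      have hv'W : v' ∈ W' := sub_mem (hW v hv) (Submodule.smul_mem _ _ hv)
      have hv'app : ∀ a, v' a = (μ a - μ i) * v a := by
        intro a
        rw [hv'def, Finsupp.sub_apply, Finsupp.smul_apply, hT, smul_eq_mul, sub_mul]
      have hsupp : v'.support = v.support.erase i := by
        ext a
        simp only [Finsupp.mem_support_iff, hv'app, Finset.mem_erase, mul_ne_zero_iff,
          sub_ne_zero]
        constructor
        · rintro ⟨h1, h2⟩; exact ⟨fun hc => h1 (by rw [hc]), h2⟩
        · rintro ⟨h1, h2⟩; exact ⟨fun hc => h1 (hμ hc), h2⟩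
      have hcard' : v'.support.card ≤ N := by
        rw [hsupp, Finset.card_erase_of_mem hi]; omega
      have hsingles : ∀ a ∈ v.support.erase i, Finsupp.single a (v a) ∈ W' := by
        intro a ha
        have h1 : Finsupp.single a (1 : k) ∈ W' := ih v' hcard' hv'W a (by rw [hsupp]; exact ha)
        have : Finsupp.single a (v a) = v a • Finsupp.single a (1 : k) := by
          rw [Finsupp.smul_single, smul_eq_mul, mul_one]
        rw [this]; exact Submodule.smul_mem _ _ h1
      have hkey : Finsupp.single i (v i)
          = v - ∑ a ∈ v.support.erase i, Finsupp.single a (v a) := by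
        ext b
        rw [Finsupp.sub_apply, Finsupp.finset_sum_apply]
        simp only [Finsupp.single_apply]
        rw [Finset.sum_ite_eq' (v.support.erase i) b (fun a => v a)]
        by_cases hbi : i = b
        · subst hbi
          simp [Finset.mem_erase]
        · simp only [hbi, if_false]
          by_cases hb : b ∈ v.support.erase i
          · simp [hb]
          · simp only [hb, if_false]
            have : v b = 0 := by
              by_contra hc
              exact hb (Finset.mem_erase.mpr ⟨fun h => hbi h.symm, Finsupp.mem_support_iff.mpr hc⟩)
            simp [this]
      have hmem : Finsupp.single i (v i) ∈ W' := by
        rw [hkey]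
        exact sub_mem hv (Submodule.sum_mem _ hsingles)
      have : Finsupp.single i (1 : k) = (v i)⁻¹ • Finsupp.single i (v i) := by
        rw [Finsupp.smul_single, smul_eq_mul, inv_mul_cancel₀ hvi]
      rw [this]
      exact Submodule.smul_mem _ _ hmem

/-- A span is stable under a linear map sending generators into the span. -/
lemma span_stable (T : (ℕ →₀ k) →ₗ[k] (ℕ →₀ k)) (S : Set (ℕ →₀ k))
    (h : ∀ s ∈ S, T s ∈ Submodule.span k S) :
    ∀ v ∈ Submodule.span k S, T v ∈ Submodule.span k S := by
  intro v hv
  induction hv using Submodule.span_induction with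
  | mem x hx => exact h x hx
  | zero => simp
  | add x y _ _ hx hy => rw [map_add]; exact add_mem hx hy
  | smul c x _ hx => rw [map_smul]; exact Submodule.smul_mem _ _ hx

/-- The span defining `W` is the `supported` submodule. -/
lemma W_eq_supported (n : ℕ) :
    Submodule.span k {f : ℕ →₀ k | ∃ i : ℕ, n + 1 ≤ i ∧ f = Finsupp.single i 1}
      = Finsupp.supported k k {i : ℕ | n + 1 ≤ i} := by
  rw [Finsupp.supported_eq_span_single]
  congr 1
  ext f
  constructor
  · rintro ⟨i, hi, rfl⟩; exact ⟨i, hi, rfl⟩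
  · rintro ⟨i, hi, rfl⟩; exact ⟨i, hi, rfl⟩

lemma mem_W_iff (n : ℕ) (f : ℕ →₀ k) :
    f ∈ Submodule.span k {f : ℕ →₀ k | ∃ i : ℕ, n + 1 ≤ i ∧ f = Finsupp.single i 1}
      ↔ ∀ j : ℕ, j ≤ n → f j = 0 := by
  rw [W_eq_supported, Finsupp.mem_supported']
  constructor
  · intro h j hj; exact h j (by simp; omega)
  · intro h x hx; exact h x (by simpa using Nat.lt_succ_iff.mp (by simpa using hx))

lemma single_mem_W (n : ℕ) (i : ℕ) (hi : n + 1 ≤ i) (c : k) :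
    Finsupp.single i c
      ∈ Submodule.span k {f : ℕ →₀ k | ∃ i : ℕ, n + 1 ≤ i ∧ f = Finsupp.single i 1} := by
  rw [mem_W_iff]
  intro j hj
  rw [Finsupp.single_apply, if_neg (by omega)]


lemma factor_eq {q : k} (hq0 : q ≠ 0) (e : k) (he : e = 1 ∨ e = -1) (m : ℤ) (i : ℕ) :
    (e * q ^ m) * q ^ (1 - (i : ℤ)) - (e * q ^ m)⁻¹ * q ^ ((i : ℤ) - 1)
      = e * (q ^ (m + 1 - (i : ℤ)) - q ^ ((i : ℤ) - 1 - m)) := by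
  have he0 : e ≠ 0 := by rcases he with h | h <;> simp [h]
  have hei : e⁻¹ = e := by rcases he with h | h <;> norm_num [h]
  rw [mul_inv, hei]
  rw [show m + 1 - (i : ℤ) = m + (1 - (i : ℤ)) by ring,
    show (i : ℤ) - 1 - m = ((i : ℤ) - 1) + (-m) by ring]
  simp only [zpow_sub₀ hq0, zpow_add₀ hq0, zpow_one, zpow_neg]
  have hA : q ^ (i : ℤ) ≠ 0 := zpow_ne_zero _ hq0
  have hB : q ^ m ≠ 0 := zpow_ne_zero _ hq0
  field_simp


lemma lam_form {q lam : k} (n : ℕ) (hlam : lam = q ^ n ∨ lam = -(q ^ n)) :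
    ∃ e : k, (e = 1 ∨ e = -1) ∧ lam = e * q ^ (n : ℤ) := by
  rcases hlam with h | h
  · exact ⟨1, Or.inl rfl, by rw [h, one_mul, zpow_natCast]⟩
  · exact ⟨-1, Or.inr rfl, by rw [h, zpow_natCast]; ring⟩

lemma eScal_zero {q w : k} (hq0 : q ≠ 0) (e : k) (he : e = 1 ∨ e = -1) (n : ℕ) :
    eScal q w (e * q ^ (n : ℤ)) (n + 1) = 0 := by
  rw [eScal, factor_eq hq0 e he]
  rw [show (n : ℤ) + 1 - ((n + 1 : ℕ) : ℤ) = 0 by push_cast; ring,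
    show ((n + 1 : ℕ) : ℤ) - 1 - (n : ℤ) = 0 by push_cast; ring]
  simp

lemma eScal_ne_zero {q w : k} (hq0 : q ≠ 0) (hq : ∀ m : ℕ, 0 < m → q ^ m ≠ 1) (hw : w ≠ 0)
    (e : k) (he : e = 1 ∨ e = -1) (n i : ℕ) (hi1 : 1 ≤ i) (hin : i ≤ n) :
    eScal q w (e * q ^ (n : ℤ)) i ≠ 0 := by
  have he0 : e ≠ 0 := by rcases he with h | h <;> simp [h]
  rw [eScal, factor_eq hq0 e he, div_ne_zero_iff]
  refine ⟨mul_ne_zero (mul_ne_zero (qint_ne_zero hq0 hq i hi1) hw)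
    (mul_ne_zero he0 ?_), q_sub_qinv_ne hq0 hq⟩
  rw [sub_ne_zero]
  intro hcon
  have := zpow_injective hq0 hq hcon
  omega

lemma eScal_shift {q w : k} (hq0 : q ≠ 0) (e : k) (he : e = 1 ∨ e = -1) (n i : ℕ) :
    eScal q w (e * q ^ (-(n : ℤ) - 2)) i = eScal q w (e * q ^ (n : ℤ)) (i + n + 1) := by
  rw [eScal, eScal, factor_eq hq0 e he, factor_eq hq0 e he, qint, qint]
  rw [show -(n : ℤ) - 2 + 1 - (i : ℤ) = -((n : ℤ) + 1 + (i : ℤ)) by ring,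
    show (i : ℤ) - 1 - (-(n : ℤ) - 2) = (i : ℤ) + ((n : ℤ) + 1) by ring,
    show (n : ℤ) + 1 - ((i + n + 1 : ℕ) : ℤ) = -(i : ℤ) by push_cast; ring,
    show ((i + n + 1 : ℕ) : ℤ) - 1 - (n : ℤ) = (i : ℤ) by push_cast; ring]
  simp only [inv_pow, ← zpow_natCast q, zpow_neg, zpow_add₀ hq0, zpow_one, Nat.cast_add,
    Nat.cast_one]
  have hA : q ^ (i : ℤ) ≠ 0 := zpow_ne_zero _ hq0
  have hB : q ^ (n : ℤ) ≠ 0 := zpow_ne_zero _ hq0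
  field_simp
  ring


lemma diag_shift {q : k} (hq0 : q ≠ 0) (a lam : k) (n i : ℕ) :
    a * (q ^ (-(2 * ((n : ℤ) + 1))) * lam) * q ^ (-(2 * (i : ℤ)))
      = a * lam * q ^ (-(2 * ((i + n + 1 : ℕ) : ℤ))) := by
  rw [show (-(2 * ((i + n + 1 : ℕ) : ℤ))) = (-(2 * ((n : ℤ) + 1))) + (-(2 * (i : ℤ))) by
    push_cast; ring, zpow_add₀ hq0]
  ring

lemma mu_eq {q : k} (hq0 : q ≠ 0) (e : k) (n : ℕ) :
    q ^ (-(2 * ((n : ℤ) + 1))) * (e * q ^ (n : ℤ)) = e * q ^ (-(n : ℤ) - 2) := by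
  rw [show (-(n : ℤ) - 2) = (-(2 * ((n : ℤ) + 1))) + (n : ℤ) by ring, zpow_add₀ hq0]
  ring

lemma top_of_singles (W' : Submodule k (ℕ →₀ k))
    (h : ∀ i : ℕ, Finsupp.single i (1 : k) ∈ W') : W' = ⊤ := by
  rw [eq_top_iff]
  intro f _
  induction f using Finsupp.induction with
  | zero => exact zero_mem _
  | single_add a b f _ _ ih =>
      refine add_mem ?_ (ih trivial)
      have : Finsupp.single a b = b • Finsupp.single a (1 : k) := by
        rw [Finsupp.smul_single, smul_eq_mul, mul_one]
      rw [this]; exact Submodule.smul_mem _ _ (h a)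

lemma pump_top {q w : k} (hq0 : q ≠ 0) (hq : ∀ m : ℕ, 0 < m → q ^ m ≠ 1) (hw : w ≠ 0)
    (e : k) (he : e = 1 ∨ e = -1) (n : ℕ) (W' : Submodule k (ℕ →₀ k))
    (hE : ∀ v ∈ W', vE k q w (e * q ^ (n : ℤ)) v ∈ W')
    (hF : ∀ v ∈ W', vF k v ∈ W')
    (i : ℕ) (hin : i ≤ n) (hi : Finsupp.single i (1 : k) ∈ W') : W' = ⊤ := by
  have h0 : Finsupp.single 0 (1 : k) ∈ W' := by
    induction i with
    | zero => exact hi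
    | succ j ih =>
        refine ih (by omega) ?_
        have h1 := hE _ hi
        rw [vE_single q w _ (j + 1) 1 (by omega)] at h1
        simp only [Nat.add_sub_cancel] at h1
        have hne := eScal_ne_zero hq0 hq hw e he n (j + 1) (by omega) hin
        have : Finsupp.single j (1 : k)
            = (eScal q w (e * q ^ (n : ℤ)) (j + 1))⁻¹ •
              ((eScal q w (e * q ^ (n : ℤ)) (j + 1)) • Finsupp.single j (1 : k)) := by
          rw [smul_smul, inv_mul_cancel₀ hne, one_smul]
        rw [this]
        exact Submodule.smul_mem _ _ h1
  refine top_of_singles _ fun j => ?_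
  induction j with
  | zero => exact h0
  | succ m ih =>
      have := hF _ ih
      rwa [vF_single] at this


lemma invariant_top {q w lam : k} (hq0 : q ≠ 0) (hq : ∀ m : ℕ, 0 < m → q ^ m ≠ 1)
    (hw : w ≠ 0) (hlam0 : lam ≠ 0)
    (e : k) (he : e = 1 ∨ e = -1) (n : ℕ) (hlame : lam = e * q ^ (n : ℤ))
    (W' : Submodule k (ℕ →₀ k))
    (hK : ∀ v ∈ W', vK k q w lam v ∈ W')
    (hE : ∀ v ∈ W', vE k q w lam v ∈ W')
    (hF : ∀ v ∈ W', vF k v ∈ W')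
    (v : ℕ →₀ k) (hv : v ∈ W')
    (hvW : v ∉ Submodule.span k
      {f : ℕ →₀ k | ∃ i : ℕ, n + 1 ≤ i ∧ f = Finsupp.single i 1}) :
    W' = ⊤ := by
  rw [mem_W_iff] at hvW
  push_neg at hvW
  obtain ⟨j, hjn, hvj⟩ := hvW
  have hμ : Function.Injective (fun i : ℕ => w * lam * q ^ (-(2 * (i : ℤ)))) := by
    intro a b hab
    simp only at hab
    have h1 : q ^ (-(2 * (a : ℤ))) = q ^ (-(2 * (b : ℤ))) :=
      mul_left_cancel₀ (mul_ne_zero hw hlam0) hab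
    have := zpow_injective hq0 hq h1
    omega
  have hsingle := eigen_sep W' _ hμ (vK k q w lam) (vK_apply q w lam) hK v hv j
    (Finsupp.mem_support_iff.mpr hvj)
  rw [hlame] at hE
  exact pump_top hq0 hq hw e he n W' hE hF j hjn hsingle

lemma quot_finrank (n : ℕ) :
    Module.finrank k ((ℕ →₀ k) ⧸ (Submodule.span k
      {f : ℕ →₀ k | ∃ i : ℕ, n + 1 ≤ i ∧ f = Finsupp.single i 1})) = n + 1 := by
  set π : (ℕ →₀ k) →ₗ[k] (Fin (n + 1) → k) :=
    LinearMap.pi (fun j : Fin (n + 1) => Finsupp.lapply (j : ℕ)) with hπ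
  have hker : LinearMap.ker π
      = Submodule.span k {f : ℕ →₀ k | ∃ i : ℕ, n + 1 ≤ i ∧ f = Finsupp.single i 1} := by
    ext f
    rw [LinearMap.mem_ker, mem_W_iff]
    constructor
    · intro h j hj
      have := congrFun h ⟨j, by omega⟩
      simpa [hπ] using this
    · intro h
      funext j
      simpa [hπ] using h (j : ℕ) (by omega)
  have hsurj : Function.Surjective π := by
    intro g
    refine ⟨∑ j : Fin (n + 1), Finsupp.single (j : ℕ) (g j), ?_⟩
    funext j'
    simp only [hπ, LinearMap.pi_apply, Finsupp.lapply_apply]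
    rw [Finsupp.finset_sum_apply]
    rw [Finset.sum_eq_single j']
    · simp
    · intro b _ hb
      rw [Finsupp.single_apply, if_neg (fun hc => hb (Fin.val_injective hc))]
    · intro h; exact absurd (Finset.mem_univ j') h
  rw [← hker]
  rw [(π.quotKerEquivOfSurjective hsurj).finrank_eq]
  simp [Module.finrank_pi]

lemma ext_apply {A B iota : (ℕ →₀ k) →ₗ[k] (ℕ →₀ k)}
    (h : ∀ (i : ℕ) (c : k), iota (A (Finsupp.single i c)) = B (iota (Finsupp.single i c))) :
    ∀ v, iota (A v) = B (iota v) := by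
  intro v
  have hc : iota.comp A = B.comp iota := Finsupp.lhom_ext fun i c => h i c
  exact LinearMap.congr_fun hc v

end VermaAux

/-- if `q` is not a root of unity and `λ = ±qⁿ`, then
`W = span{m_i : i ≥ n+1}` is a `D_q`-submodule of `M_w(λ)`, every proper submodule
is contained in `W`, `W ≅ M_w(q^{−2(n+1)}λ)`, and `M_w(λ)/W` is simple of
dimension `n+1`. -/
theorem verma_maximal_submodule (k : Type) [Field k] (q w lam : k)
    (hq0 : q ≠ 0) (hq : ∀ m : ℕ, 0 < m → q ^ m ≠ 1) (hw : w ≠ 0) (hlam0 : lam ≠ 0)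
    (n : ℕ) (hlam : lam = q ^ n ∨ lam = -(q ^ n))
    (ρ : Dq k q →ₐ[k] Module.End k (ℕ →₀ k)) (hρ : VermaCond k q w lam ρ) :
    letI W : Submodule k (ℕ →₀ k) :=
      Submodule.span k {f : ℕ →₀ k | ∃ i : ℕ, n + 1 ≤ i ∧ f = Finsupp.single i 1}
    (∀ (x : Dq k q), ∀ v ∈ W, ρ x v ∈ W) ∧
    (∀ W' : Submodule k (ℕ →₀ k),
        (∀ (x : Dq k q), ∀ v ∈ W', ρ x v ∈ W') → W' ≠ ⊤ → W' ≤ W) ∧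
    (∀ ρ' : Dq k q →ₐ[k] Module.End k (ℕ →₀ k),
        VermaCond k q w (q ^ (-(2 * ((n : ℤ) + 1))) * lam) ρ' →
        ∃ ι : (ℕ →₀ k) →ₗ[k] (ℕ →₀ k),
          Function.Injective ι ∧ LinearMap.range ι = W ∧
          ∀ (x : Dq k q) (v : ℕ →₀ k), ι (ρ' x v) = ρ x (ι v)) ∧
    Module.finrank k ((ℕ →₀ k) ⧸ W) = n + 1 ∧
    (∀ U : Submodule k (ℕ →₀ k),
        (∀ (x : Dq k q), ∀ v ∈ U, ρ x v ∈ U) → W ≤ U → U = W ∨ U = ⊤) := by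
  obtain ⟨hρE, hρF, hρK, hρKinv, hρKt, hρKtinv⟩ := hρ
  obtain ⟨e, he, hlame⟩ := VermaAux.lam_form n hlam
  set W := Submodule.span k
      {f : ℕ →₀ k | ∃ i : ℕ, n + 1 ≤ i ∧ f = Finsupp.single i 1} with hW
  -- closure of W under the generator operators
  have hKW : ∀ v ∈ W, vK k q w lam v ∈ W := by
    rw [hW]; refine VermaAux.span_stable _ _ ?_
    rintro s ⟨i, hi, rfl⟩
    rw [VermaAux.vK_single]
    exact Submodule.smul_mem _ _ (VermaAux.single_mem_W n i hi 1)
  have hKinvW : ∀ v ∈ W, vKinv k q w lam v ∈ W := by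
    rw [hW]; refine VermaAux.span_stable _ _ ?_
    rintro s ⟨i, hi, rfl⟩
    rw [VermaAux.vKinv_single]
    exact Submodule.smul_mem _ _ (VermaAux.single_mem_W n i hi 1)
  have hKtW : ∀ v ∈ W, vKt k q w lam v ∈ W := by
    rw [hW]; refine VermaAux.span_stable _ _ ?_
    rintro s ⟨i, hi, rfl⟩
    rw [VermaAux.vKt_single]
    exact Submodule.smul_mem _ _ (VermaAux.single_mem_W n i hi 1)
  have hKtinvW : ∀ v ∈ W, vKtinv k q w lam v ∈ W := by
    rw [hW]; refine VermaAux.span_stable _ _ ?_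
    rintro s ⟨i, hi, rfl⟩
    rw [VermaAux.vKtinv_single]
    exact Submodule.smul_mem _ _ (VermaAux.single_mem_W n i hi 1)
  have hFW : ∀ v ∈ W, vF k v ∈ W := by
    rw [hW]; refine VermaAux.span_stable _ _ ?_
    rintro s ⟨i, hi, rfl⟩
    rw [VermaAux.vF_single]
    exact VermaAux.single_mem_W n (i + 1) (by omega) 1
  have hEW : ∀ v ∈ W, vE k q w lam v ∈ W := by
    rw [hW]; refine VermaAux.span_stable _ _ ?_
    rintro s ⟨i, hi, rfl⟩
    rw [VermaAux.vE_single q w lam i 1 (by omega)]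
    rcases Nat.eq_or_lt_of_le hi with heq | hlt
    · rw [← heq, hlame, VermaAux.eScal_zero hq0 e he n, zero_smul]
      exact zero_mem _
    · exact Submodule.smul_mem _ _ (VermaAux.single_mem_W n (i - 1) (by omega) 1)
  have goal1 : ∀ (x : Dq k q), ∀ v ∈ W, ρ x v ∈ W := by
    intro x
    induction x using VermaAux.Dq.induction with
    | halg c =>
        intro v hv
        rw [AlgHom.commutes, Module.algebraMap_end_apply]
        exact Submodule.smul_mem _ _ hv
    | hE => rw [hρE]; exact hEW
    | hF => rw [hρF]; exact hFW
    | hK => rw [hρK]; exact hKW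
    | hKinv => rw [hρKinv]; exact hKinvW
    | hKt => rw [hρKt]; exact hKtW
    | hKtinv => rw [hρKtinv]; exact hKtinvW
    | hmul a b ha hb =>
        intro v hv
        rw [map_mul, Module.End.mul_apply]
        exact ha _ (hb _ hv)
    | hadd a b ha hb =>
        intro v hv
        rw [map_add, LinearMap.add_apply]
        exact add_mem (ha _ hv) (hb _ hv)
  refine ⟨goal1, ?_, ?_, VermaAux.quot_finrank n, ?_⟩
  -- every proper submodule is contained in W
  · intro W' hstab hne v hv
    by_contra hvW
    apply hne
    refine VermaAux.invariant_top hq0 hq hw hlam0 e he n hlame W' ?_ ?_ ?_ v hv hvW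
    · intro u hu; have := hstab (DK k q) u hu; rwa [hρK] at this
    · intro u hu; have := hstab (DE k q) u hu; rwa [hρE] at this
    · intro u hu; have := hstab (DF k q) u hu; rwa [hρF] at this
  -- the isomorphism W ≅ M_w(q^{-2(n+1)}λ)
  · intro ρ' hρ'
    obtain ⟨hE', hF', hK', hKinv', hKt', hKtinv'⟩ := hρ'
    have hmue : q ^ (-(2 * ((n : ℤ) + 1))) * lam = e * q ^ (-(n : ℤ) - 2) := by
      rw [hlame, VermaAux.mu_eq hq0]
    refine ⟨Finsupp.lmapDomain k k (fun i => i + (n + 1)), ?_, ?_, ?_⟩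
    · intro a b hab
      rw [Finsupp.lmapDomain_apply, Finsupp.lmapDomain_apply] at hab
      exact Finsupp.mapDomain_injective (fun a b h => by omega) hab
    · apply le_antisymm
      · rintro x ⟨f, rfl⟩
        rw [hW, VermaAux.mem_W_iff]
        intro j hj
        rw [Finsupp.lmapDomain_apply]
        apply Finsupp.mapDomain_notin_range
        rintro ⟨a, ha⟩
        simp only at ha
        omega
      · rw [hW, Submodule.span_le]
        rintro s ⟨i, hi, rfl⟩
        refine ⟨Finsupp.single (i - (n + 1)) 1, ?_⟩
        rw [Finsupp.lmapDomain_apply, Finsupp.mapDomain_single]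
        congr 1
        omega
    · intro x
      induction x using VermaAux.Dq.induction with
      | halg c =>
          intro v
          rw [AlgHom.commutes, AlgHom.commutes, Module.algebraMap_end_apply,
            Module.algebraMap_end_apply, map_smul]
      | hmul a b ha hb =>
          intro v
          rw [map_mul, map_mul, Module.End.mul_apply, Module.End.mul_apply, ha, hb]
      | hadd a b ha hb =>
          intro v
          rw [map_add, map_add, LinearMap.add_apply, LinearMap.add_apply, map_add, ha, hb]
      | hK =>
          rw [hρK, hK']
          refine VermaAux.ext_apply fun i c => ?_
          simp only [LinearMap.comp_apply, VermaAux.vK_single, map_smul,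
            Finsupp.lmapDomain_apply, Finsupp.mapDomain_single]
          rw [show i + (n + 1) = i + n + 1 by omega, VermaAux.diag_shift hq0 w lam n i]
      | hKinv =>
          rw [hρKinv, hKinv']
          refine VermaAux.ext_apply fun i c => ?_
          simp only [LinearMap.comp_apply, VermaAux.vKinv_single, map_smul,
            Finsupp.lmapDomain_apply, Finsupp.mapDomain_single]
          rw [show i + (n + 1) = i + n + 1 by omega, VermaAux.diag_shift hq0 w lam n i]
      | hKt =>
          rw [hρKt, hKt']
          refine VermaAux.ext_apply fun i c => ?_
          simp only [LinearMap.comp_apply, VermaAux.vKt_single, map_smul,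
            Finsupp.lmapDomain_apply, Finsupp.mapDomain_single]
          rw [show i + (n + 1) = i + n + 1 by omega, VermaAux.diag_shift hq0 w⁻¹ lam n i]
      | hKtinv =>
          rw [hρKtinv, hKtinv']
          refine VermaAux.ext_apply fun i c => ?_
          simp only [LinearMap.comp_apply, VermaAux.vKtinv_single, map_smul,
            Finsupp.lmapDomain_apply, Finsupp.mapDomain_single]
          rw [show i + (n + 1) = i + n + 1 by omega, VermaAux.diag_shift hq0 w⁻¹ lam n i]
      | hF =>
          rw [hρF, hF']
          refine VermaAux.ext_apply fun i c => ?_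
          simp only [LinearMap.comp_apply, VermaAux.vF_single,
            Finsupp.lmapDomain_apply, Finsupp.mapDomain_single]
          congr 1
          omega
      | hE =>
          rw [hρE, hE']
          refine VermaAux.ext_apply fun i c => ?_
          simp only [LinearMap.comp_apply, Finsupp.lmapDomain_apply, Finsupp.mapDomain_single]
          cases i with
          | zero =>
              rw [VermaAux.vE_single_zero, Finsupp.mapDomain_zero,
                show (0 : ℕ) + (n + 1) = n + 1 by omega,
                VermaAux.vE_single q w lam (n + 1) c (by omega), hlame,
                VermaAux.eScal_zero hq0 e he n, zero_smul]
          | succ j =>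
              rw [VermaAux.vE_single q w _ (j + 1) c (by omega), Finsupp.mapDomain_smul,
                Finsupp.mapDomain_single,
                VermaAux.vE_single q w lam (j + 1 + (n + 1)) c (by omega)]
              rw [show j + 1 - 1 + (n + 1) = j + 1 + (n + 1) - 1 by omega]
              rw [hmue, hlame, VermaAux.eScal_shift hq0 e he n (j + 1),
                show j + 1 + n + 1 = j + 1 + (n + 1) by omega]
  -- W is maximal: any invariant U containing W is W or ⊤
  · intro U hUstab hWU
    by_cases hUW : U ≤ W
    · exact Or.inl (le_antisymm hUW hWU)
    · right
      rw [SetLike.not_le_iff_exists] at hUW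
      obtain ⟨v, hvU, hvW⟩ := hUW
      refine VermaAux.invariant_top hq0 hq hw hlam0 e he n hlame U ?_ ?_ ?_ v hvU hvW
      · intro u hu; have := hUstab (DK k q) u hu; rwa [hρK] at this
      · intro u hu; have := hUstab (DE k q) u hu; rwa [hρE] at this
      · intro u hu; have := hUstab (DF k q) u hu; rwa [hρF] at this
end
end

section
/- For any w ∈ k^× and n ∈ ℕ, the formulas K·m_i = wq^{n−2i}·m_i, K̃·m_i = w⁻¹q^{n−2i}·m_i, F·m_i = m_{i+1} (with m_{n+1} := 0), E·m_0 = 0, and E·m_i = w·[i]_q·[n+1−i]_q·m_{i−1} for 1 ≤ i ≤ n define a D_q-module structure L(w,n) on the (n+1)-dimensional k-vector space with basis m_0,…,m_n: there is a unique k-algebra homomorphism from D_q to its endomorphism algebra with these values on the generators (and K⁻¹, K̃⁻¹ going to the inverse operators). If moreover q is not a root of unity, then L(w,n) is a simple D_q-module. -/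
noncomputable section

/-- Action of `K` on `L(w,n)`: `K·m_i = wq^{n−2i}·m_i`. -/
def lK (k : Type) [Field k] (q w : k) (n : ℕ) :
    (Fin (n + 1) →₀ k) →ₗ[k] (Fin (n + 1) →₀ k) :=
  Finsupp.lift (Fin (n + 1) →₀ k) k (Fin (n + 1)) fun i =>
    (w * q ^ ((n : ℤ) - 2 * ((i : ℕ) : ℤ))) • Finsupp.single i 1

/-- Action of `K⁻¹` on `L(w,n)` (the inverse operator of `lK`). -/
def lKinv (k : Type) [Field k] (q w : k) (n : ℕ) :
    (Fin (n + 1) →₀ k) →ₗ[k] (Fin (n + 1) →₀ k) :=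
  Finsupp.lift (Fin (n + 1) →₀ k) k (Fin (n + 1)) fun i =>
    ((w * q ^ ((n : ℤ) - 2 * ((i : ℕ) : ℤ)))⁻¹) • Finsupp.single i 1

/-- Action of `K̃` on `L(w,n)`: `K̃·m_i = w⁻¹q^{n−2i}·m_i`. -/
def lKt (k : Type) [Field k] (q w : k) (n : ℕ) :
    (Fin (n + 1) →₀ k) →ₗ[k] (Fin (n + 1) →₀ k) :=
  Finsupp.lift (Fin (n + 1) →₀ k) k (Fin (n + 1)) fun i =>
    (w⁻¹ * q ^ ((n : ℤ) - 2 * ((i : ℕ) : ℤ))) • Finsupp.single i 1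

/-- Action of `K̃⁻¹` on `L(w,n)` (the inverse operator of `lKt`). -/
def lKtinv (k : Type) [Field k] (q w : k) (n : ℕ) :
    (Fin (n + 1) →₀ k) →ₗ[k] (Fin (n + 1) →₀ k) :=
  Finsupp.lift (Fin (n + 1) →₀ k) k (Fin (n + 1)) fun i =>
    ((w⁻¹ * q ^ ((n : ℤ) - 2 * ((i : ℕ) : ℤ)))⁻¹) • Finsupp.single i 1

/-- Action of `F` on `L(w,n)`: `F·m_i = m_{i+1}` with `m_{n+1} := 0`. -/
def lF (k : Type) [Field k] (n : ℕ) :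
    (Fin (n + 1) →₀ k) →ₗ[k] (Fin (n + 1) →₀ k) :=
  Finsupp.lift (Fin (n + 1) →₀ k) k (Fin (n + 1)) fun i =>
    if h : (i : ℕ) + 1 < n + 1 then Finsupp.single (⟨(i : ℕ) + 1, h⟩ : Fin (n + 1)) 1 else 0

/-- Action of `E` on `L(w,n)`: `E·m_0 = 0`, `E·m_i = w·[i]_q·[n+1−i]_q·m_{i−1}`. -/
def lE (k : Type) [Field k] (q w : k) (n : ℕ) :
    (Fin (n + 1) →₀ k) →ₗ[k] (Fin (n + 1) →₀ k) :=
  Finsupp.lift (Fin (n + 1) →₀ k) k (Fin (n + 1)) fun i =>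
    if (i : ℕ) = 0 then 0
    else
      (w * qint k q (i : ℕ) * qint k q (n + 1 - (i : ℕ))) •
        Finsupp.single
          (⟨(i : ℕ) - 1, Nat.lt_of_le_of_lt (Nat.sub_le _ _) i.isLt⟩ : Fin (n + 1)) 1

/-- `ρ` realizes the simple module `L(w,n)` on `Fin (n+1) →₀ k`. -/
def LCond (k : Type) [Field k] (q w : k) (n : ℕ)
    (ρ : Dq k q →ₐ[k] Module.End k (Fin (n + 1) →₀ k)) : Prop :=
  ρ (DE k q) = lE k q w n ∧ ρ (DF k q) = lF k n ∧
  ρ (DK k q) = lK k q w n ∧ ρ (DKinv k q) = lKinv k q w n ∧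
  ρ (DKt k q) = lKt k q w n ∧ ρ (DKtinv k q) = lKtinv k q w n
variable {k : Type} [Field k] {q w : k} {n : ℕ}
variable {k : Type} [Field k] {q w : k} {n : ℕ}

lemma lift_single (f : Fin (n+1) → (Fin (n+1) →₀ k)) (i : Fin (n+1)) (b : k) :
    Finsupp.lift (Fin (n+1) →₀ k) k (Fin (n+1)) f (Finsupp.single i b) = b • f i := by
  rw [Finsupp.lift_apply, Finsupp.sum_single_index (by simp)]

lemma lK_single (i : Fin (n+1)) (b : k) :
    lK k q w n (Finsupp.single i b)
      = b • ((w * q ^ ((n : ℤ) - 2 * ((i : ℕ) : ℤ))) • Finsupp.single i 1) :=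
  lift_single _ i b

lemma lKinv_single (i : Fin (n+1)) (b : k) :
    lKinv k q w n (Finsupp.single i b)
      = b • (((w * q ^ ((n : ℤ) - 2 * ((i : ℕ) : ℤ)))⁻¹) • Finsupp.single i 1) :=
  lift_single _ i b

lemma lKt_single (i : Fin (n+1)) (b : k) :
    lKt k q w n (Finsupp.single i b)
      = b • ((w⁻¹ * q ^ ((n : ℤ) - 2 * ((i : ℕ) : ℤ))) • Finsupp.single i 1) :=
  lift_single _ i b

lemma lKtinv_single (i : Fin (n+1)) (b : k) :
    lKtinv k q w n (Finsupp.single i b)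
      = b • (((w⁻¹ * q ^ ((n : ℤ) - 2 * ((i : ℕ) : ℤ)))⁻¹) • Finsupp.single i 1) :=
  lift_single _ i b

lemma lF_single (i : Fin (n+1)) (b : k) :
    lF k n (Finsupp.single i b)
      = b • (if h : (i : ℕ) + 1 < n + 1 then Finsupp.single (⟨(i : ℕ) + 1, h⟩ : Fin (n+1)) 1 else 0) :=
  lift_single _ i b

lemma lE_single (i : Fin (n+1)) (b : k) :
    lE k q w n (Finsupp.single i b)
      = b • (if (i : ℕ) = 0 then 0
        else (w * qint k q (i : ℕ) * qint k q (n + 1 - (i : ℕ))) •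
          Finsupp.single (⟨(i : ℕ) - 1, Nat.lt_of_le_of_lt (Nat.sub_le _ _) i.isLt⟩ : Fin (n+1)) 1) :=
  lift_single _ i b

lemma KEscalar (hq0 : q ≠ 0) {i : ℕ} (hi : i ≠ 0) :
    w * q ^ ((n:ℤ) - 2 * ((i - 1 : ℕ) : ℤ)) = q ^ 2 * (w * q ^ ((n:ℤ) - 2 * (i : ℤ))) := by
  have h1 : ((i - 1 : ℕ) : ℤ) = (i : ℤ) - 1 := by omega
  rw [h1, show (n:ℤ) - 2*((i:ℤ) - 1) = ((n:ℤ) - 2*(i:ℤ)) + 2 by ring,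
    zpow_add₀ hq0, zpow_two, pow_two]
  ring

lemma relKE (hq0 : q ≠ 0) :
    (lK k q w n) * (lE k q w n) = (q^2) • ((lE k q w n) * (lK k q w n)) := by
  apply Finsupp.lhom_ext
  intro i b
  simp only [Module.End.mul_apply, LinearMap.smul_apply, lE_single, lK_single, map_smul]
  by_cases hi : (i : ℕ) = 0
  · simp [hi]
  · simp only [hi, if_neg, if_false, map_smul, lK_single, smul_smul]
    congr 1
    rw [KEscalar hq0 hi]
    ring
lemma sub_inv_ne_zero (hq0 : q ≠ 0) (hq1 : q^2 ≠ 1) : q - q⁻¹ ≠ 0 := by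
  intro h
  apply hq1
  have h2 : q = q⁻¹ := sub_eq_zero.mp h
  rw [pow_two]
  nth_rewrite 2 [h2]
  exact mul_inv_cancel₀ hq0

lemma qint_zero : qint k q 0 = 0 := by simp [qint]

lemma EFscalar (hq0 : q ≠ 0) (hq1 : q^2 ≠ 1) (i d : ℕ) (z : ℤ) (hz : z = (d:ℤ) - (i:ℤ)) :
    w * qint k q (i+1) * qint k q d - w * qint k q i * qint k q (d+1)
      = (q - q⁻¹)⁻¹ * (w * q ^ z - (w⁻¹ * q ^ z)⁻¹) := by
  have hqs : q - q⁻¹ ≠ 0 := sub_inv_ne_zero hq0 hq1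
  rw [hz, zpow_sub₀ hq0, zpow_natCast, zpow_natCast]
  have h2 : (w⁻¹ * (q ^ d / q ^ i))⁻¹ = w * (q ^ i * (q ^ d)⁻¹) := by
    rw [mul_inv, inv_inv, inv_div, div_eq_mul_inv]
  rw [h2]
  simp only [qint, inv_pow, pow_succ, div_eq_mul_inv]
  have hc : (q - q⁻¹) * (q - q⁻¹)⁻¹ = 1 := mul_inv_cancel₀ hqs
  linear_combination (w * (q - q⁻¹)⁻¹ * (q ^ d * (q ^ i)⁻¹ - q ^ i * (q ^ d)⁻¹)) * hc
lemma lam_ne_zero (hq0 : q ≠ 0) (hw : w ≠ 0) (i : Fin (n+1)) :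
    w * q ^ ((n : ℤ) - 2 * ((i : ℕ) : ℤ)) ≠ 0 :=
  mul_ne_zero hw (zpow_ne_zero _ hq0)

lemma relKtE (hq0 : q ≠ 0) :
    (lKt k q w n) * (lE k q w n) = (q^2) • ((lE k q w n) * (lKt k q w n)) := by
  apply Finsupp.lhom_ext
  intro i b
  simp only [Module.End.mul_apply, LinearMap.smul_apply, lE_single, lKt_single, map_smul]
  by_cases hi : (i : ℕ) = 0
  · simp [hi]
  · simp only [hi, if_neg, if_false, map_smul, lKt_single, smul_smul]
    congr 1
    rw [KEscalar (w := w⁻¹) hq0 hi]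
    ring

lemma KFscalar (hq0 : q ≠ 0) (j : ℕ) :
    w * q ^ ((n:ℤ) - 2 * ((j + 1 : ℕ) : ℤ)) = (q ^ 2)⁻¹ * (w * q ^ ((n:ℤ) - 2 * (j : ℤ))) := by
  have h2 : (q:k) ^ (-2 : ℤ) = (q ^ (2:ℕ))⁻¹ := by rw [zpow_neg]; norm_cast
  rw [show (n:ℤ) - 2*(((j:ℕ) + 1 : ℕ):ℤ) = ((n:ℤ) - 2*(j:ℤ)) + (-2) by push_cast; ring,
    zpow_add₀ hq0, h2]
  ring

lemma relKF (hq0 : q ≠ 0) :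
    (lK k q w n) * (lF k n) = ((q^2)⁻¹) • ((lF k n) * (lK k q w n)) := by
  apply Finsupp.lhom_ext
  intro i b
  simp only [Module.End.mul_apply, LinearMap.smul_apply, lF_single, lK_single, map_smul]
  by_cases h : (i : ℕ) + 1 < n + 1
  · simp only [dif_pos h, lK_single, smul_smul]
    congr 1
    rw [KFscalar hq0]
    ring
  · have h' : ¬ (i:ℕ) < n := by omega
    simp [h', h]

lemma relKtF (hq0 : q ≠ 0) :
    (lKt k q w n) * (lF k n) = ((q^2)⁻¹) • ((lF k n) * (lKt k q w n)) := by
  apply Finsupp.lhom_ext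
  intro i b
  simp only [Module.End.mul_apply, LinearMap.smul_apply, lF_single, lKt_single, map_smul]
  by_cases h : (i : ℕ) + 1 < n + 1
  · simp only [dif_pos h, lKt_single, smul_smul]
    congr 1
    rw [KFscalar (w := w⁻¹) hq0]
    ring
  · have h' : ¬ (i:ℕ) < n := by omega
    simp [h', h]

lemma relKKinv (hq0 : q ≠ 0) (hw : w ≠ 0) : (lK k q w n) * (lKinv k q w n) = 1 := by
  apply Finsupp.lhom_ext
  intro i b
  simp only [Module.End.mul_apply, Module.End.one_apply, lKinv_single, map_smul, lK_single,
    smul_smul, Finsupp.smul_single, smul_eq_mul, mul_one]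
  congr 1
  field_simp [hw, (zpow_ne_zero _ hq0 : q ^ ((n:ℤ) - 2*((i:ℕ):ℤ)) ≠ 0)]

lemma relKinvK (hq0 : q ≠ 0) (hw : w ≠ 0) : (lKinv k q w n) * (lK k q w n) = 1 := by
  apply Finsupp.lhom_ext
  intro i b
  simp only [Module.End.mul_apply, Module.End.one_apply, lKinv_single, map_smul, lK_single,
    smul_smul, Finsupp.smul_single, smul_eq_mul, mul_one]
  congr 1
  field_simp [hw, (zpow_ne_zero _ hq0 : q ^ ((n:ℤ) - 2*((i:ℕ):ℤ)) ≠ 0)]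

lemma relKtKtinv (hq0 : q ≠ 0) (hw : w ≠ 0) : (lKt k q w n) * (lKtinv k q w n) = 1 := by
  apply Finsupp.lhom_ext
  intro i b
  simp only [Module.End.mul_apply, Module.End.one_apply, lKtinv_single, map_smul, lKt_single,
    smul_smul, Finsupp.smul_single, smul_eq_mul, mul_one]
  congr 1
  field_simp [hw, (zpow_ne_zero _ hq0 : q ^ ((n:ℤ) - 2*((i:ℕ):ℤ)) ≠ 0)]

lemma relKtinvKt (hq0 : q ≠ 0) (hw : w ≠ 0) : (lKtinv k q w n) * (lKt k q w n) = 1 := by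
  apply Finsupp.lhom_ext
  intro i b
  simp only [Module.End.mul_apply, Module.End.one_apply, lKtinv_single, map_smul, lKt_single,
    smul_smul, Finsupp.smul_single, smul_eq_mul, mul_one]
  congr 1
  field_simp [hw, (zpow_ne_zero _ hq0 : q ^ ((n:ℤ) - 2*((i:ℕ):ℤ)) ≠ 0)]

lemma relKKt : (lK k q w n) * (lKt k q w n) = (lKt k q w n) * (lK k q w n) := by
  apply Finsupp.lhom_ext
  intro i b
  simp only [Module.End.mul_apply, lK_single, lKt_single, map_smul, smul_smul]
  ring_nf
lemma single_mk_eq {m : ℕ} (hm : m < n + 1) (j : Fin (n+1)) (hj : (j:ℕ) = m) :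
    Finsupp.single (⟨m, hm⟩ : Fin (n+1)) (1:k) = Finsupp.single j 1 := by
  congr 1
  exact (Fin.ext hj).symm

lemma relEF (hq0 : q ≠ 0) (hq1 : q^2 ≠ 1) :
    (lE k q w n) * (lF k n) = (lF k n) * (lE k q w n)
      + ((q - q⁻¹)⁻¹) • ((lK k q w n) - (lKtinv k q w n)) := by
  apply Finsupp.lhom_ext
  intro i b
  have hilt : (i:ℕ) < n + 1 := i.isLt
  simp only [Module.End.mul_apply, LinearMap.add_apply, LinearMap.smul_apply, LinearMap.sub_apply,
    lF_single, lE_single, lK_single, lKtinv_single, map_smul, map_sub]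
  by_cases h : (i:ℕ) + 1 < n + 1 <;> by_cases hi : (i:ℕ) = 0
  -- case i = 0 < n
  · rw [dif_pos h, lE_single]
    have e0 : ((⟨(i:ℕ)+1, h⟩ : Fin (n+1)) : ℕ) = (i:ℕ)+1 := rfl
    simp only [e0, hi, Nat.zero_add, Nat.add_sub_cancel, if_neg (Nat.one_ne_zero),
      eq_self_iff_true, if_true, map_zero, smul_zero, zero_add]
    rw [single_mk_eq (m := 0) (by omega) i (by omega)]
    have E := EFscalar (k := k) (q := q) (w := w) hq0 hq1 0 n ((n:ℤ) - 2 * ((i:ℕ):ℤ))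
      (by rw [hi]; push_cast; ring)
    simp only [qint_zero, mul_zero, zero_mul, sub_zero, zero_add, Nat.add_sub_cancel] at E
    rw [hi] at E
    match_scalars
    norm_num at E ⊢
    linear_combination b * E
  -- case 0 < i < n
  · rw [dif_pos h, lE_single]
    have e0 : ((⟨(i:ℕ)+1, h⟩ : Fin (n+1)) : ℕ) = (i:ℕ)+1 := rfl
    simp only [e0, hi, Nat.add_sub_cancel, if_neg, if_false, map_smul, lF_single]
    rw [if_neg (by omega : ¬ ((i:ℕ) + 1 = 0)), dif_pos (by omega : (i:ℕ) - 1 + 1 < n + 1)]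
    rw [single_mk_eq (m := (i:ℕ)) (by omega) i rfl,
      single_mk_eq (m := (i:ℕ) - 1 + 1) (by omega) i (by omega)]
    have E := EFscalar (k := k) (q := q) (w := w) hq0 hq1 (i:ℕ) (n - (i:ℕ))
      ((n:ℤ) - 2 * ((i:ℕ):ℤ)) (by push_cast [Nat.cast_sub (by omega : (i:ℕ) ≤ n)]; ring)
    have e1 : n + 1 - ((i:ℕ) + 1) = n - (i:ℕ) := by omega
    have e2 : n - (i:ℕ) + 1 = n + 1 - (i:ℕ) := by omega
    rw [e2, ← e1] at E
    match_scalars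
    linear_combination b * E
  -- case i = 0 = n
  · have hn0 : n = 0 := by omega
    subst hn0
    rw [dif_neg h]
    simp only [hi, if_true, map_zero, smul_zero, zero_add]
    norm_num
  -- case 0 < i = n
  · rw [dif_neg h]
    simp only [hi, if_neg, if_false, map_smul, lF_single, map_zero, smul_zero]
    rw [dif_pos (by omega : (i:ℕ) - 1 + 1 < n + 1)]
    rw [single_mk_eq (m := (i:ℕ) - 1 + 1) (by omega) i (by omega)]
    have E := EFscalar (k := k) (q := q) (w := w) hq0 hq1 (i:ℕ) 0
      ((n:ℤ) - 2 * ((i:ℕ):ℤ)) (by push_cast [show (i:ℕ) = n by omega]; ring)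
    simp only [qint_zero, mul_zero, zero_mul, sub_zero, zero_add, zero_sub] at E
    have e3 : n + 1 - (i:ℕ) = 1 := by omega
    rw [e3]
    match_scalars
    linear_combination b * E
lemma zpow_ne_one' (hq : ∀ m : ℕ, 0 < m → q ^ m ≠ 1) : ∀ z : ℤ, z ≠ 0 → q ^ z ≠ 1 := by
  intro z hz
  match z with
  | Int.ofNat m =>
    rw [Int.ofNat_eq_coe, zpow_natCast]
    exact hq m (by by_contra hm; simp at hm; subst hm; exact hz rfl)
  | Int.negSucc m =>
    rw [zpow_negSucc]
    intro h
    exact hq (m+1) (by omega) (by rwa [inv_eq_one] at h)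

lemma lam_inj (hq0 : q ≠ 0) (hw : w ≠ 0) (hq : ∀ m : ℕ, 0 < m → q ^ m ≠ 1)
    {i j : Fin (n+1)} (hne : i ≠ j) :
    w * q ^ ((n:ℤ) - 2*((i:ℕ):ℤ)) ≠ w * q ^ ((n:ℤ) - 2*((j:ℕ):ℤ)) := by
  intro hEq
  have h1 : q ^ ((n:ℤ) - 2*((i:ℕ):ℤ)) = q ^ ((n:ℤ) - 2*((j:ℕ):ℤ)) := mul_left_cancel₀ hw hEq
  have h2 : q ^ (((n:ℤ) - 2*((i:ℕ):ℤ)) - ((n:ℤ) - 2*((j:ℕ):ℤ))) = 1 := by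
    rw [zpow_sub₀ hq0, h1, div_self (zpow_ne_zero _ hq0)]
  have hvne : ((i:ℕ):ℤ) ≠ ((j:ℕ):ℤ) := by
    simpa using fun hh => hne (Fin.ext hh)
  exact zpow_ne_one' hq _ (by omega) h2

lemma qint_ne_zero (hq0 : q ≠ 0) (hq : ∀ m : ℕ, 0 < m → q ^ m ≠ 1) {m : ℕ} (hm : 0 < m) :
    qint k q m ≠ 0 := by
  have hq1 : q ^ 2 ≠ 1 := hq 2 (by norm_num)
  have hqs := sub_inv_ne_zero hq0 hq1
  refine div_ne_zero ?_ hqs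
  intro h
  have h1 : q ^ m = (q ^ m)⁻¹ := by rw [← inv_pow]; exact sub_eq_zero.mp h
  have h2 : q ^ m * q ^ m = 1 := by
    nth_rewrite 2 [h1]
    exact mul_inv_cancel₀ (pow_ne_zero m hq0)
  exact hq (m + m) (by omega) (by rwa [pow_add])

lemma lK_apply (v : Fin (n+1) →₀ k) (j : Fin (n+1)) :
    lK k q w n v j = (w * q ^ ((n:ℤ) - 2*((j:ℕ):ℤ))) * v j := by
  induction v using Finsupp.induction_linear with
  | zero => simp
  | add f g hf hg => rw [map_add, Finsupp.add_apply, hf, hg, Finsupp.add_apply]; ring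
  | single a c =>
    rw [lK_single]
    rcases eq_or_ne a j with rfl | hne
    · simp [Finsupp.single_apply, mul_comm]
    · simp [Finsupp.single_apply, hne]
/-- the stated formulas define a (unique) `D_q`-module structure
`L(w,n)` on the `(n+1)`-dimensional space with basis `m_0, …, m_n`; if `q` is not
a root of unity then `L(w,n)` is a simple `D_q`-module. -/
theorem L_module_structure (k : Type) [Field k] (q w : k) (n : ℕ)
    (hq0 : q ≠ 0) (hq1 : q ^ 2 ≠ 1) (hw : w ≠ 0) :
    (∃! ρ : Dq k q →ₐ[k] Module.End k (Fin (n + 1) →₀ k), LCond k q w n ρ) ∧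
    ((∀ m : ℕ, 0 < m → q ^ m ≠ 1) →
      ∀ ρ : Dq k q →ₐ[k] Module.End k (Fin (n + 1) →₀ k), LCond k q w n ρ →
        ∀ W : Submodule k (Fin (n + 1) →₀ k),
          (∀ (x : Dq k q), ∀ v ∈ W, ρ x v ∈ W) → W = ⊥ ∨ W = ⊤) := by
  constructor
  · -- existence and uniqueness
    set φ : FreeAlgebra k DGen →ₐ[k] Module.End k (Fin (n + 1) →₀ k) :=
      FreeAlgebra.lift k (fun g => match g with
        | DGen.E => lE k q w n | DGen.F => lF k n | DGen.K => lK k q w n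
        | DGen.Kinv => lKinv k q w n | DGen.Kt => lKt k q w n
        | DGen.Ktinv => lKtinv k q w n) with hφ
    have hφE : φ (FreeAlgebra.ι k DGen.E) = lE k q w n := FreeAlgebra.lift_ι_apply _ _
    have hφF : φ (FreeAlgebra.ι k DGen.F) = lF k n := FreeAlgebra.lift_ι_apply _ _
    have hφK : φ (FreeAlgebra.ι k DGen.K) = lK k q w n := FreeAlgebra.lift_ι_apply _ _
    have hφKi : φ (FreeAlgebra.ι k DGen.Kinv) = lKinv k q w n := FreeAlgebra.lift_ι_apply _ _
    have hφKt : φ (FreeAlgebra.ι k DGen.Kt) = lKt k q w n := FreeAlgebra.lift_ι_apply _ _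
    have hφKti : φ (FreeAlgebra.ι k DGen.Ktinv) = lKtinv k q w n := FreeAlgebra.lift_ι_apply _ _
    have hrel : ∀ ⦃x y⦄, DRel k q x y → φ x = φ y := by
      intro x y h
      cases h <;>
        simp only [map_mul, map_smul, map_add, map_sub, map_one,
          hφE, hφF, hφK, hφKi, hφKt, hφKti]
      · exact relKE hq0
      · exact relKF hq0
      · exact relKtE hq0
      · exact relKtF hq0
      · exact relKKinv hq0 hw
      · exact relKinvK hq0 hw
      · exact relKtKtinv hq0 hw
      · exact relKtinvKt hq0 hw
      · exact relKKt
      · exact relEF hq0 hq1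
    set ρ0 : Dq k q →ₐ[k] Module.End k (Fin (n + 1) →₀ k) :=
      RingQuot.liftAlgHom k ⟨φ, hrel⟩ with hρ0
    have hval : ∀ g : DGen, ρ0 (RingQuot.mkAlgHom k (DRel k q) (FreeAlgebra.ι k g))
        = φ (FreeAlgebra.ι k g) := by
      intro g
      rw [hρ0, RingQuot.liftAlgHom_mkAlgHom_apply]
    have hcond : LCond k q w n ρ0 := by
      refine ⟨?_, ?_, ?_, ?_, ?_, ?_⟩
      · rw [DE, hval, hφE]
      · rw [DF, hval, hφF]
      · rw [DK, hval, hφK]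
      · rw [DKinv, hval, hφKi]
      · rw [DKt, hval, hφKt]
      · rw [DKtinv, hval, hφKti]
    refine ⟨ρ0, hcond, ?_⟩
    intro ρ' h'
    have hcomp : ρ'.comp (RingQuot.mkAlgHom k (DRel k q))
        = ρ0.comp (RingQuot.mkAlgHom k (DRel k q)) := by
      apply FreeAlgebra.hom_ext
      funext g
      cases g
      · exact h'.1.trans hcond.1.symm
      · exact h'.2.1.trans hcond.2.1.symm
      · exact h'.2.2.1.trans hcond.2.2.1.symm
      · exact h'.2.2.2.1.trans hcond.2.2.2.1.symm
      · exact h'.2.2.2.2.1.trans hcond.2.2.2.2.1.symm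
      · exact h'.2.2.2.2.2.trans hcond.2.2.2.2.2.symm
    apply AlgHom.ext
    intro x
    obtain ⟨a, rfl⟩ := RingQuot.mkAlgHom_surjective k (DRel k q) x
    exact AlgHom.congr_fun hcomp a
  · -- simplicity
    intro hq ρ hρ W hW
    by_cases hbot : W = ⊥
    · exact Or.inl hbot
    right
    obtain ⟨v, hvW, hv0⟩ := (Submodule.ne_bot_iff W).mp hbot
    have singles : ∀ N : ℕ, ∀ u : Fin (n+1) →₀ k, u.support.card ≤ N → u ∈ W →
        ∀ i ∈ u.support, Finsupp.single i (1:k) ∈ W := by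
      intro N
      induction N with
      | zero =>
        intro u hc huW i hi
        have := Finset.card_pos.mpr ⟨i, hi⟩
        omega
      | succ N ih =>
        intro u hc huW i hi
        by_cases hall : ∀ j ∈ u.support, j = i
        · have hui : u i ≠ 0 := Finsupp.mem_support_iff.mp hi
          have hu : u = Finsupp.single i (u i) := by
            ext j
            rcases eq_or_ne j i with rfl | hne
            · simp
            · have hj : j ∉ u.support := fun hj => hne (hall j hj)
              rw [Finsupp.notMem_support_iff.mp hj,
                Finsupp.single_eq_of_ne hne]
          have hmem : (u i)⁻¹ • u ∈ W := W.smul_mem _ huW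
          have heq : (u i)⁻¹ • u = Finsupp.single i (1:k) := by
            rw [hu]
            simp [Finsupp.single_eq_same, Finsupp.smul_single, smul_eq_mul,
              inv_mul_cancel₀ hui]
          rwa [heq] at hmem
        · push_neg at hall
          obtain ⟨j, hjs, hji⟩ := hall
          have hKv : ρ (DK k q) u ∈ W := hW _ u huW
          rw [hρ.2.2.1] at hKv
          have hu'W : lK k q w n u - (w * q ^ ((n:ℤ) - 2*((j:ℕ):ℤ))) • u ∈ W :=
            Submodule.sub_mem _ hKv (W.smul_mem _ huW)
          set u' := lK k q w n u - (w * q ^ ((n:ℤ) - 2*((j:ℕ):ℤ))) • u with hu'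
          have happ : ∀ a, u' a
              = (w * q ^ ((n:ℤ) - 2*((a:ℕ):ℤ)) - w * q ^ ((n:ℤ) - 2*((j:ℕ):ℤ))) * u a := by
            intro a
            rw [hu', Finsupp.sub_apply, Finsupp.smul_apply, lK_apply, smul_eq_mul]
            ring
          have hsupp : u'.support ⊆ u.support.erase j := by
            intro a ha
            have hva' : u' a ≠ 0 := Finsupp.mem_support_iff.mp ha
            rw [Finset.mem_erase]
            constructor
            · rintro rfl
              exact hva' (by rw [happ]; simp)
            · rw [Finsupp.mem_support_iff]
              intro h0
              exact hva' (by rw [happ, h0, mul_zero])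
          have hcard : u'.support.card ≤ N := by
            have h1 := Finset.card_le_card hsupp
            have h2 := Finset.card_erase_of_mem hjs
            omega
          apply ih u' hcard hu'W
          rw [Finsupp.mem_support_iff, happ]
          exact mul_ne_zero (sub_ne_zero.mpr (lam_inj hq0 hw hq (Ne.symm hji)))
            (Finsupp.mem_support_iff.mp hi)
    obtain ⟨i0, hi0⟩ := Finset.Nonempty.exists_mem (Finsupp.support_nonempty_iff.mpr hv0)
    have hsingle0 : Finsupp.single i0 (1:k) ∈ W := singles _ v le_rfl hvW i0 hi0
    have down : ∀ m : ℕ, ∀ i : Fin (n+1), (i:ℕ) = m → Finsupp.single i (1:k) ∈ W →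
        Finsupp.single (⟨0, Nat.succ_pos n⟩ : Fin (n+1)) (1:k) ∈ W := by
      intro m
      induction m with
      | zero =>
        intro i hi hiW
        rwa [show (⟨0, Nat.succ_pos n⟩ : Fin (n+1)) = i from Fin.ext hi.symm]
      | succ m ih =>
        intro i hi hiW
        have hE := hW (DE k q) _ hiW
        rw [hρ.1, lE_single, if_neg (by omega), one_smul] at hE
        have hile : (i:ℕ) < n + 1 := i.isLt
        have hc : (w * qint k q (i:ℕ) * qint k q (n+1-(i:ℕ))) ≠ 0 :=
          mul_ne_zero (mul_ne_zero hw (qint_ne_zero hq0 hq (by omega)))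
            (qint_ne_zero hq0 hq (by omega))
        have hE2 := W.smul_mem (w * qint k q (i:ℕ) * qint k q (n+1-(i:ℕ)))⁻¹ hE
        rw [smul_smul, inv_mul_cancel₀ hc, one_smul] at hE2
        exact ih _ (by simp; omega) hE2
    have up : ∀ m : ℕ, ∀ hm : m < n + 1, Finsupp.single (⟨m, hm⟩ : Fin (n+1)) (1:k) ∈ W := by
      intro m
      induction m with
      | zero => intro hm; exact down _ i0 rfl hsingle0
      | succ m ih =>
        intro hm
        have hmW := ih (by omega)
        have hF := hW (DF k q) _ hmW
        rw [hρ.2.1, lF_single, one_smul, dif_pos (show ((⟨m, by omega⟩ : Fin (n+1)) : ℕ) + 1 < n + 1 from hm)] at hF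
        exact hF
    rw [eq_top_iff]
    intro u _
    rw [← Finsupp.sum_single u]
    apply Submodule.sum_mem
    intro a _
    have h1 := W.smul_mem (u a) (up (a : ℕ) a.isLt)
    rwa [Fin.eta, Finsupp.smul_single, smul_eq_mul, mul_one] at h1
end
end

section
/- Assume k is algebraically closed. Let ρ : D_q → End_k(V) be a finite-dimensional simple representation (V ≠ 0 and the only subspaces of V invariant under all operators ρ(x), x ∈ D_q, are 0 and V). Then there exist w ∈ k^× and a k-algebra homomorphism σ : U_q → End_k(V) such that ρ(E) = w·σ(E), ρ(F) = σ(F), ρ(K) = w·σ(K) and ρ(K̃) = w⁻¹·σ(K). The same conclusion holds if instead of simple, V is a nonzero finite-dimensional indecomposable D_q-module on which ρ(K) and ρ(K̃) are diagonalizable. -/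
noncomputable section

/-- Generators of `U_q(sl2)`. -/
inductive UGen : Type
  | E | F | K | Kinv
  deriving DecidableEq

/-- The defining relations of `U_q(sl2)`. -/
inductive URel (k : Type) [Field k] (q : k) :
    FreeAlgebra k UGen → FreeAlgebra k UGen → Prop
  | KE : URel k q (FreeAlgebra.ι k UGen.K * FreeAlgebra.ι k UGen.E)
      ((q ^ 2) • (FreeAlgebra.ι k UGen.E * FreeAlgebra.ι k UGen.K))
  | KF : URel k q (FreeAlgebra.ι k UGen.K * FreeAlgebra.ι k UGen.F)
      (((q ^ 2)⁻¹) • (FreeAlgebra.ι k UGen.F * FreeAlgebra.ι k UGen.K))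
  | KKinv : URel k q (FreeAlgebra.ι k UGen.K * FreeAlgebra.ι k UGen.Kinv) 1
  | KinvK : URel k q (FreeAlgebra.ι k UGen.Kinv * FreeAlgebra.ι k UGen.K) 1
  | EF : URel k q (FreeAlgebra.ι k UGen.E * FreeAlgebra.ι k UGen.F)
      (FreeAlgebra.ι k UGen.F * FreeAlgebra.ι k UGen.E +
        ((q - q⁻¹)⁻¹) • (FreeAlgebra.ι k UGen.K - FreeAlgebra.ι k UGen.Kinv))

/-- The quantized enveloping algebra `U_q(sl2)`. -/
abbrev Uq (k : Type) [Field k] (q : k) := RingQuot (URel k q)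

def UE (k : Type) [Field k] (q : k) : Uq k q :=
  RingQuot.mkAlgHom k (URel k q) (FreeAlgebra.ι k UGen.E)
def UF (k : Type) [Field k] (q : k) : Uq k q :=
  RingQuot.mkAlgHom k (URel k q) (FreeAlgebra.ι k UGen.F)
def UK (k : Type) [Field k] (q : k) : Uq k q :=
  RingQuot.mkAlgHom k (URel k q) (FreeAlgebra.ι k UGen.K)
def UKinv (k : Type) [Field k] (q : k) : Uq k q :=
  RingQuot.mkAlgHom k (URel k q) (FreeAlgebra.ι k UGen.Kinv)

open Polynomial in
lemma diag_isSemisimple {k V : Type} [Field k] [AddCommGroup V] [Module k V]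
    [FiniteDimensional k V] (f : Module.End k V)
    (h : (⨆ μ : k, f.eigenspace μ) = ⊤) : f.IsSemisimple := by
  classical
  obtain ⟨s, hs⟩ : ∃ s : Finset k, (⊤ : Submodule k V) ≤ ⨆ μ : s, f.eigenspace μ := by
    have hc : IsCompactElement (⊤ : Submodule k V) :=
      (Submodule.fg_iff_compact _).mp Module.Finite.fg_top
    obtain ⟨t, ht⟩ := (CompleteLattice.isCompactElement_iff_exists_le_iSup_of_le_iSup _).mp hc k f.eigenspace (h.ge)
    refine ⟨t, ?_⟩
    rw [Finset.sup_eq_iSup] at ht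
    exact ht.trans (iSup₂_le fun a ha => le_iSup (fun μ : t => f.eigenspace ↑μ) ⟨a, ha⟩)
  set p : k[X] := ∏ μ ∈ s, (X - C μ) with hp
  have hsep : p.Separable := separable_prod_X_sub_C_iff'.mpr (fun x _ y _ hxy => hxy)
  refine Module.End.isSemisimple_of_squarefree_aeval_eq_zero hsep.squarefree ?_
  ext v
  have hv : v ∈ ⨆ μ : s, f.eigenspace μ := hs Submodule.mem_top
  simp only [LinearMap.zero_apply]
  induction hv using Submodule.iSup_induction' with
  | mem μ w hw =>
      have hw' : f w = (μ : k) • w := Module.End.mem_eigenspace_iff.mp hw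
      have hsplit : p = (∏ ν ∈ s.erase μ, (X - C ν)) * (X - C (μ : k)) :=
        (Finset.prod_erase_mul s _ μ.2).symm
      rw [hsplit, map_mul, Module.End.mul_apply]
      have : (Polynomial.aeval f (X - C (μ : k))) w = 0 := by
        simp [hw', Module.algebraMap_end_apply]
      rw [this, map_zero]
  | zero => simp
  | add x y _ _ hx hy => simp [map_add, hx, hy]

/-- over an algebraically closed field, every finite-dimensional simple
representation of `D_q` — and likewise every finite-dimensional indecomposable one on
which `K` and `K̃` act diagonalizably — is the pullback (twisted by a scalar `w`) of a
representation of `U_q`. -/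
theorem simple_Dq_rep_pullback (k : Type) [Field k] [IsAlgClosed k] (q : k)
    (hq0 : q ≠ 0) (hq1 : q ^ 2 ≠ 1)
    (V : Type) [AddCommGroup V] [Module k V] [FiniteDimensional k V] [Nontrivial V]
    (ρ : Dq k q →ₐ[k] Module.End k V)
    (hV :
      (∀ W : Submodule k V, (∀ (x : Dq k q), ∀ v ∈ W, ρ x v ∈ W) → W = ⊥ ∨ W = ⊤) ∨
      ((¬ ∃ W₁ W₂ : Submodule k V,
          (∀ (x : Dq k q), ∀ v ∈ W₁, ρ x v ∈ W₁) ∧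
          (∀ (x : Dq k q), ∀ v ∈ W₂, ρ x v ∈ W₂) ∧
          W₁ ≠ ⊥ ∧ W₂ ≠ ⊥ ∧ W₁ ⊓ W₂ = ⊥ ∧ W₁ ⊔ W₂ = ⊤) ∧
        (⨆ μ : k, (ρ (DK k q)).eigenspace μ) = ⊤ ∧
        (⨆ μ : k, (ρ (DKt k q)).eigenspace μ) = ⊤)) :
    ∃ w : k, w ≠ 0 ∧
      ∃ σ : Uq k q →ₐ[k] Module.End k V,
        ρ (DE k q) = w • σ (UE k q) ∧
        ρ (DF k q) = σ (UF k q) ∧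
        ρ (DK k q) = w • σ (UK k q) ∧
        ρ (DKt k q) = w⁻¹ • σ (UK k q) := by
  
  classical
  have hq2 : (q : k) ^ 2 ≠ 0 := pow_ne_zero 2 hq0
  -- relations in End k V
  have rel : ∀ {a b : FreeAlgebra k DGen}, DRel k q a b →
      ρ (RingQuot.mkAlgHom k (DRel k q) a) = ρ (RingQuot.mkAlgHom k (DRel k q) b) :=
    fun h => congrArg ρ (RingQuot.mkAlgHom_rel k h)
  set A := ρ (DE k q) with hAdef
  set B := ρ (DF k q) with hBdef
  set P := ρ (DK k q) with hPdef
  set P' := ρ (DKinv k q) with hP'def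
  set Q := ρ (DKt k q) with hQdef
  set Q' := ρ (DKtinv k q) with hQ'def
  have r1 : P * A = q ^ 2 • (A * P) := by
    have h := rel DRel.KE; simp only [map_mul, map_smul] at h; exact h
  have r2 : P * B = (q ^ 2)⁻¹ • (B * P) := by
    have h := rel DRel.KF; simp only [map_mul, map_smul] at h; exact h
  have r3 : Q * A = q ^ 2 • (A * Q) := by
    have h := rel DRel.KtE; simp only [map_mul, map_smul] at h; exact h
  have r4 : Q * B = (q ^ 2)⁻¹ • (B * Q) := by
    have h := rel DRel.KtF; simp only [map_mul, map_smul] at h; exact h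
  have r5 : P * P' = 1 := by
    have h := rel DRel.KKinv; simp only [map_mul, map_one] at h; exact h
  have r6 : P' * P = 1 := by
    have h := rel DRel.KinvK; simp only [map_mul, map_one] at h; exact h
  have r7 : Q * Q' = 1 := by
    have h := rel DRel.KtKtinv; simp only [map_mul, map_one] at h; exact h
  have r8 : Q' * Q = 1 := by
    have h := rel DRel.KtinvKt; simp only [map_mul, map_one] at h; exact h
  have r9 : P * Q = Q * P := by
    have h := rel DRel.KKt; simp only [map_mul] at h; exact h
  have r10 : A * B = B * A + (q - q⁻¹)⁻¹ • (P - Q') := by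
    have h := rel DRel.EF; simp only [map_mul, map_add, map_smul, map_sub] at h; exact h
  -- derived relations
  have d1 : Q' * A = (q ^ 2)⁻¹ • (A * Q') := by
    have h : A * Q' = q ^ 2 • (Q' * A) := by
      calc A * Q' = Q' * Q * A * Q' := by rw [r8, one_mul]
        _ = Q' * (Q * A) * Q' := by rw [mul_assoc Q' Q A]
        _ = Q' * (q ^ 2 • (A * Q)) * Q' := by rw [r3]
        _ = q ^ 2 • (Q' * (A * Q) * Q') := by rw [mul_smul_comm, smul_mul_assoc]
        _ = q ^ 2 • (Q' * A * (Q * Q')) := by rw [← mul_assoc Q' A Q, mul_assoc (Q' * A) Q Q']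
        _ = q ^ 2 • (Q' * A) := by rw [r7, mul_one]
    rw [h, smul_smul, inv_mul_cancel₀ hq2, one_smul]
  have d2 : Q' * B = q ^ 2 • (B * Q') := by
    have h : B * Q' = (q ^ 2)⁻¹ • (Q' * B) := by
      calc B * Q' = Q' * Q * B * Q' := by rw [r8, one_mul]
        _ = Q' * (Q * B) * Q' := by rw [mul_assoc Q' Q B]
        _ = Q' * ((q ^ 2)⁻¹ • (B * Q)) * Q' := by rw [r4]
        _ = (q ^ 2)⁻¹ • (Q' * (B * Q) * Q') := by rw [mul_smul_comm, smul_mul_assoc]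
        _ = (q ^ 2)⁻¹ • (Q' * B * (Q * Q')) := by rw [← mul_assoc Q' B Q, mul_assoc (Q' * B) Q Q']
        _ = (q ^ 2)⁻¹ • (Q' * B) := by rw [r7, mul_one]
    rw [h, smul_smul, mul_inv_cancel₀ hq2, one_smul]
  have d3 : Q' * P = P * Q' := by
    calc Q' * P = Q' * P * (Q * Q') := by rw [r7, mul_one]
      _ = Q' * (P * Q) * Q' := by rw [← mul_assoc (Q' * P) Q Q', mul_assoc Q' P Q]
      _ = Q' * (Q * P) * Q' := by rw [r9]
      _ = Q' * Q * P * Q' := by rw [mul_assoc Q' Q P]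
      _ = P * Q' := by rw [r8, one_mul]
  have d4 : Q' * P' = P' * Q' := by
    calc Q' * P' = P' * P * (Q' * P') := by rw [r6, one_mul]
      _ = P' * (P * Q') * P' := by
          rw [mul_assoc P' P (Q' * P'), ← mul_assoc P Q' P', mul_assoc P' (P * Q') P']
      _ = P' * (Q' * P) * P' := by rw [d3]
      _ = P' * Q' * (P * P') := by rw [← mul_assoc P' Q' P, mul_assoc (P' * Q') P P']
      _ = P' * Q' := by rw [r5, mul_one]
  -- c0 commutes with the image of ρ
  have cA : (P * Q') * A = A * (P * Q') := by
    calc P * Q' * A = P * (Q' * A) := mul_assoc _ _ _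
      _ = P * ((q ^ 2)⁻¹ • (A * Q')) := by rw [d1]
      _ = (q ^ 2)⁻¹ • (P * A * Q') := by rw [mul_smul_comm, mul_assoc]
      _ = (q ^ 2)⁻¹ • (q ^ 2 • (A * P) * Q') := by rw [r1]
      _ = (q ^ 2)⁻¹ • q ^ 2 • (A * P * Q') := by rw [smul_mul_assoc]
      _ = A * P * Q' := by rw [smul_smul, inv_mul_cancel₀ hq2, one_smul]
      _ = A * (P * Q') := mul_assoc _ _ _
  have cB : (P * Q') * B = B * (P * Q') := by
    calc P * Q' * B = P * (Q' * B) := mul_assoc _ _ _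
      _ = P * (q ^ 2 • (B * Q')) := by rw [d2]
      _ = q ^ 2 • (P * B * Q') := by rw [mul_smul_comm, mul_assoc]
      _ = q ^ 2 • ((q ^ 2)⁻¹ • (B * P) * Q') := by rw [r2]
      _ = q ^ 2 • (q ^ 2)⁻¹ • (B * P * Q') := by rw [smul_mul_assoc]
      _ = B * P * Q' := by rw [smul_smul, mul_inv_cancel₀ hq2, one_smul]
      _ = B * (P * Q') := mul_assoc _ _ _
  have cP : (P * Q') * P = P * (P * Q') := by
    rw [mul_assoc, d3, ← mul_assoc]
  have cP' : (P * Q') * P' = P' * (P * Q') := by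
    rw [mul_assoc, d4, ← mul_assoc, ← mul_assoc, r5, one_mul, r6, one_mul]
  have cQ : (P * Q') * Q = Q * (P * Q') := by
    rw [mul_assoc, r8, mul_one, ← mul_assoc, ← r9, mul_assoc, r7, mul_one]
  have cQ' : (P * Q') * Q' = Q' * (P * Q') := by
    rw [← mul_assoc, ← d3, mul_assoc]
  have key : ∀ x : Dq k q, Commute (P * Q') (ρ x) := by
    intro x
    obtain ⟨a, rfl⟩ := RingQuot.mkAlgHom_surjective k (DRel k q) x
    induction a using FreeAlgebra.induction with
    | grade0 r =>
        simp only [AlgHom.commutes]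
        exact (Algebra.commutes r (P * Q')).symm
    | grade1 g =>
        cases g
        · exact cA
        · exact cB
        · exact cP
        · exact cP'
        · exact cQ
        · exact cQ'
    | mul a b ha hb => simp only [map_mul]; exact ha.mul_right hb
    | add a b ha hb => simp only [map_add]; exact ha.add_right hb
  -- eigenspaces of P * Q' are invariant under the representation
  have hInv : ∀ (μ : k) (x : Dq k q), ∀ v ∈ (P * Q').eigenspace μ,
      ρ x v ∈ (P * Q').eigenspace μ := by
    intro μ x v hv
    rw [Module.End.mem_eigenspace_iff] at hv ⊢
    calc (P * Q') (ρ x v) = ((P * Q') * ρ x) v := rfl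
      _ = (ρ x * (P * Q')) v := by rw [key x]
      _ = ρ x ((P * Q') v) := rfl
      _ = ρ x (μ • v) := by rw [hv]
      _ = μ • ρ x v := map_smul _ _ _
  -- in either case, P * Q' has an eigenspace equal to ⊤
  have htop : ∃ μ : k, (P * Q').eigenspace μ = ⊤ := by
    rcases hV with hsimp | ⟨hind, hKd, hKtd⟩
    · obtain ⟨μ, hμ⟩ := Module.End.exists_eigenvalue (P * Q')
      refine ⟨μ, ?_⟩
      rcases hsimp ((P * Q').eigenspace μ) (fun x v hv => hInv μ x v hv) with h | h
      · exact absurd h hμ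
      · exact h
    · -- indecomposable case
      have hQ'd : (⨆ μ : k, Q'.eigenspace μ) = ⊤ := by
        rw [eq_top_iff, ← hKtd]
        refine iSup_le fun μ => ?_
        intro v hv
        have hv' : Q v = μ • v := Module.End.mem_eigenspace_iff.mp hv
        by_cases hv0 : v = 0
        · simp [hv0]
        have h1 : Q' (Q v) = v := by
          rw [← Module.End.mul_apply, r8, Module.End.one_apply]
        have hμ0 : μ ≠ 0 := by
          rintro rfl
          rw [hv', zero_smul, map_zero] at h1
          exact hv0 h1.symm
        have h2 : Q' v = μ⁻¹ • v := by
          rw [hv', map_smul] at h1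
          calc Q' v = μ⁻¹ • (μ • Q' v) := by
                rw [smul_smul, inv_mul_cancel₀ hμ0, one_smul]
            _ = μ⁻¹ • v := by rw [h1]
        exact le_iSup (fun ν => Q'.eigenspace ν) μ⁻¹ (Module.End.mem_eigenspace_iff.mpr h2)
      have hPss : P.IsSemisimple := diag_isSemisimple P hKd
      have hQ'ss : Q'.IsSemisimple := diag_isSemisimple Q' hQ'd
      have hCss : (P * Q').IsSemisimple :=
        Module.End.IsSemisimple.mul_of_commute d3.symm hPss hQ'ss
      have hCd : (⨆ μ : k, (P * Q').eigenspace μ) = ⊤ := by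
        have hfs := hCss.isFinitelySemisimple
        simpa only [hfs.maxGenEigenspace_eq_eigenspace] using
          Module.End.iSup_maxGenEigenspace_eq_top (P * Q')
      obtain ⟨μ₀, hμ₀⟩ : ∃ μ : k, (P * Q').eigenspace μ ≠ ⊥ := by
        by_contra h
        push_neg at h
        have : (⊤ : Submodule k V) = ⊥ := by
          rw [← hCd]
          simp [h]
        exact absurd this.symm bot_ne_top
      have hsup : (P * Q').eigenspace μ₀ ⊔ (⨆ ν, ⨆ _ : ν ≠ μ₀, (P * Q').eigenspace ν) = ⊤ := by
        rw [← iSup_split_single (fun ν => (P * Q').eigenspace ν) μ₀]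
        exact hCd
      have hdisj : (P * Q').eigenspace μ₀ ⊓ (⨆ ν, ⨆ _ : ν ≠ μ₀, (P * Q').eigenspace ν) = ⊥ :=
        disjoint_iff.mp ((P * Q').eigenspaces_iSupIndep μ₀)
      have hW2inv : ∀ x : Dq k q, ∀ v ∈ (⨆ ν, ⨆ _ : ν ≠ μ₀, (P * Q').eigenspace ν),
          ρ x v ∈ (⨆ ν, ⨆ _ : ν ≠ μ₀, (P * Q').eigenspace ν) := by
        intro x
        have h := iSup₂_le (f := fun ν (_ : ν ≠ μ₀) => (P * Q').eigenspace ν)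
          (fun ν hν => le_trans (fun v hv => Submodule.mem_comap.mpr (hInv ν x v hv))
            (Submodule.comap_mono
              (le_iSup₂ (f := fun ν (_ : ν ≠ μ₀) => (P * Q').eigenspace ν) ν hν)))
        exact fun v hv => Submodule.mem_comap.mp (h hv)
      have hW2 : (⨆ ν, ⨆ _ : ν ≠ μ₀, (P * Q').eigenspace ν) = ⊥ := by
        by_contra hW2
        exact hind ⟨(P * Q').eigenspace μ₀, ⨆ ν, ⨆ _ : ν ≠ μ₀, (P * Q').eigenspace ν,
          fun x v hv => hInv μ₀ x v hv, hW2inv, hμ₀, hW2, hdisj, hsup⟩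
      refine ⟨μ₀, ?_⟩
      rw [hW2, sup_bot_eq] at hsup
      exact hsup
  obtain ⟨c, hCtop⟩ := htop
  have hC : P * Q' = c • (1 : Module.End k V) := by
    ext v
    have : v ∈ (P * Q').eigenspace c := hCtop ▸ Submodule.mem_top
    simpa using Module.End.mem_eigenspace_iff.mp this
  -- c is nonzero
  have hCinv : (P * Q') * (Q * P') = 1 := by
    rw [mul_assoc, ← mul_assoc Q' Q P', r8, one_mul, r5]
  have hc0 : c ≠ 0 := by
    rintro rfl
    rw [hC, zero_smul, zero_mul] at hCinv
    obtain ⟨v, hv⟩ := exists_ne (0 : V)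
    have := congrArg (fun f : Module.End k V => f v) hCinv
    simp at this
    exact hv this.symm
  -- consequences
  have hQ'eq : Q' = c • P' := by
    calc Q' = P' * P * Q' := by rw [r6, one_mul]
      _ = P' * (P * Q') := mul_assoc _ _ _
      _ = P' * (c • 1) := by rw [hC]
      _ = c • P' := by rw [mul_smul_comm, mul_one]
  have hQeq : Q = c⁻¹ • P := by
    have h1 : P = c • Q := by
      calc P = P * (Q' * Q) := by rw [r8, mul_one]
        _ = P * Q' * Q := (mul_assoc _ _ _).symm
        _ = (c • 1) * Q := by rw [hC]
        _ = c • Q := by rw [smul_mul_assoc, one_mul]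
    rw [h1, smul_smul, inv_mul_cancel₀ hc0, one_smul]
  -- choose a square root of c
  obtain ⟨w, hw⟩ := IsAlgClosed.exists_pow_nat_eq c (n := 2) (by norm_num)
  have hw0 : w ≠ 0 := by
    rintro rfl
    rw [zero_pow (by norm_num : (2 : ℕ) ≠ 0)] at hw
    exact hc0 hw.symm
  have hww : w * w = c := by rw [← hw]; ring
  -- build the representation of U_q
  set f0 : UGen → Module.End k V := fun g =>
    match g with
    | UGen.E => w⁻¹ • A
    | UGen.F => B
    | UGen.K => w⁻¹ • P
    | UGen.Kinv => w • P'
    with hf0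
  have hrel : ∀ ⦃a b : FreeAlgebra k UGen⦄, URel k q a b →
      FreeAlgebra.lift k f0 a = FreeAlgebra.lift k f0 b := by
    intro a b h
    induction h with
    | KE =>
        simp only [map_mul, map_smul, FreeAlgebra.lift_ι_apply, hf0]
        rw [smul_mul_smul_comm, mul_smul_comm, smul_mul_assoc, r1]
        module
    | KF =>
        simp only [map_mul, map_smul, FreeAlgebra.lift_ι_apply, hf0]
        rw [smul_mul_assoc, mul_smul_comm, r2]
        module
    | KKinv =>
        simp only [map_mul, map_one, FreeAlgebra.lift_ι_apply, hf0]
        rw [smul_mul_smul_comm, inv_mul_cancel₀ hw0, r5, one_smul]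
    | KinvK =>
        simp only [map_mul, map_one, FreeAlgebra.lift_ι_apply, hf0]
        rw [smul_mul_smul_comm, mul_inv_cancel₀ hw0, r6, one_smul]
    | EF =>
        simp only [map_mul, map_add, map_smul, map_sub, FreeAlgebra.lift_ι_apply, hf0]
        rw [smul_mul_assoc, mul_smul_comm, r10, smul_add]
        congr 1
        rw [hQ'eq, ← hww, smul_comm w⁻¹ ((q - q⁻¹)⁻¹), smul_sub w⁻¹, smul_smul w⁻¹,
          inv_mul_cancel_left₀ hw0]
  set σ : Uq k q →ₐ[k] Module.End k V :=
    RingQuot.liftAlgHom k ⟨FreeAlgebra.lift k f0, hrel⟩ with hσ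
  have hσE : σ (UE k q) = w⁻¹ • A := by
    rw [hσ, UE, RingQuot.liftAlgHom_mkAlgHom_apply, FreeAlgebra.lift_ι_apply]
  have hσF : σ (UF k q) = B := by
    rw [hσ, UF, RingQuot.liftAlgHom_mkAlgHom_apply, FreeAlgebra.lift_ι_apply]
  have hσK : σ (UK k q) = w⁻¹ • P := by
    rw [hσ, UK, RingQuot.liftAlgHom_mkAlgHom_apply, FreeAlgebra.lift_ι_apply]
  refine ⟨w, hw0, σ, ?_, ?_, ?_, ?_⟩
  · rw [hσE, smul_smul, mul_inv_cancel₀ hw0, one_smul]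
  · rw [hσF]
  · rw [hσK, smul_smul, mul_inv_cancel₀ hw0, one_smul]
  · rw [hσK, hQeq, smul_smul, ← hww, mul_inv]
end
end

section
/- In D_q, the element C := FE + (Kq + K̃⁻¹q⁻¹)/(q − q⁻¹)² satisfies C = EF + (Kq⁻¹ + K̃⁻¹q)/(q − q⁻¹)², and C is central in D_q: it commutes with E, F, K, K⁻¹, K̃ and K̃⁻¹, hence with every element of D_q. Moreover, the element KK̃⁻¹ is also central in D_q. -/
noncomputable section

namespace CasimirAux

variable {k : Type} [Field k] {q : k}

theorem conj_helper {A : Type*} [Ring A] [Algebra k A] {a ai x : A} {c : k} (hc : c ≠ 0)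
    (h1 : a * ai = 1) (h2 : ai * a = 1) (h : a * x = c • (x * a)) :
    ai * x = c⁻¹ • (x * ai) := by
  have key : x * ai = c • (ai * x) := by
    have h' := congrArg (fun y => ai * y * ai) h
    simp only [mul_smul_comm, smul_mul_assoc] at h'
    calc x * ai = 1 * x * ai := by rw [one_mul]
    _ = ai * (a * x) * ai := by rw [← h2]; noncomm_ring
    _ = c • (ai * (x * a) * ai) := by rw [h']
    _ = c • (ai * x * (a * ai)) := by noncomm_ring
    _ = c • (ai * x) := by rw [h1, mul_one]
  rw [key, smul_smul, inv_mul_cancel₀ hc, one_smul]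

theorem comm_helper {A : Type*} [Ring A] {a ai x : A}
    (h1 : a * ai = 1) (h2 : ai * a = 1) (h : x * a = a * x) :
    ai * x = x * ai := by
  calc ai * x = ai * x * (a * ai) := by rw [h1, mul_one]
  _ = ai * (x * a) * ai := by noncomm_ring
  _ = ai * (a * x) * ai := by rw [h]
  _ = (ai * a) * (x * ai) := by noncomm_ring
  _ = x * ai := by rw [h2, one_mul]

/-! Basic relations in `Dq`. -/

theorem rKE : DK k q * DE k q = (q ^ 2) • (DE k q * DK k q) := by
  have h := RingQuot.mkAlgHom_rel k (@DRel.KE k _ q)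
  rw [map_mul, map_smul, map_mul] at h
  exact h

theorem rKF : DK k q * DF k q = ((q ^ 2)⁻¹) • (DF k q * DK k q) := by
  have h := RingQuot.mkAlgHom_rel k (@DRel.KF k _ q)
  rw [map_mul, map_smul, map_mul] at h
  exact h

theorem rKtE : DKt k q * DE k q = (q ^ 2) • (DE k q * DKt k q) := by
  have h := RingQuot.mkAlgHom_rel k (@DRel.KtE k _ q)
  rw [map_mul, map_smul, map_mul] at h
  exact h

theorem rKtF : DKt k q * DF k q = ((q ^ 2)⁻¹) • (DF k q * DKt k q) := by
  have h := RingQuot.mkAlgHom_rel k (@DRel.KtF k _ q)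
  rw [map_mul, map_smul, map_mul] at h
  exact h

theorem rKKi : DK k q * DKinv k q = 1 := by
  have h := RingQuot.mkAlgHom_rel k (@DRel.KKinv k _ q)
  rw [map_mul, map_one] at h
  exact h

theorem rKiK : DKinv k q * DK k q = 1 := by
  have h := RingQuot.mkAlgHom_rel k (@DRel.KinvK k _ q)
  rw [map_mul, map_one] at h
  exact h

theorem rKtKti : DKt k q * DKtinv k q = 1 := by
  have h := RingQuot.mkAlgHom_rel k (@DRel.KtKtinv k _ q)
  rw [map_mul, map_one] at h
  exact h

theorem rKtiKt : DKtinv k q * DKt k q = 1 := by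
  have h := RingQuot.mkAlgHom_rel k (@DRel.KtinvKt k _ q)
  rw [map_mul, map_one] at h
  exact h

theorem rKKt : DK k q * DKt k q = DKt k q * DK k q := by
  have h := RingQuot.mkAlgHom_rel k (@DRel.KKt k _ q)
  rw [map_mul, map_mul] at h
  exact h

theorem rEF : DE k q * DF k q =
    DF k q * DE k q + ((q - q⁻¹)⁻¹) • (DK k q - DKtinv k q) := by
  have h := RingQuot.mkAlgHom_rel k (@DRel.EF k _ q)
  rw [map_mul, map_add, map_mul, map_smul, map_sub] at h
  exact h

/-! Derived relations. -/

theorem rKtiE (hq0 : q ≠ 0) : DKtinv k q * DE k q = ((q ^ 2)⁻¹) • (DE k q * DKtinv k q) :=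
  conj_helper (pow_ne_zero 2 hq0) rKtKti rKtiKt rKtE

theorem rKtiF (hq0 : q ≠ 0) : DKtinv k q * DF k q = (q ^ 2) • (DF k q * DKtinv k q) := by
  have h := conj_helper (inv_ne_zero (pow_ne_zero 2 hq0)) rKtKti rKtiKt rKtF
  rwa [inv_inv] at h

theorem rKiE (hq0 : q ≠ 0) : DKinv k q * DE k q = ((q ^ 2)⁻¹) • (DE k q * DKinv k q) :=
  conj_helper (pow_ne_zero 2 hq0) rKKi rKiK rKE

theorem rKiF (hq0 : q ≠ 0) : DKinv k q * DF k q = (q ^ 2) • (DF k q * DKinv k q) := by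
  have h := conj_helper (inv_ne_zero (pow_ne_zero 2 hq0)) rKKi rKiK rKF
  rwa [inv_inv] at h

theorem rKKti : DK k q * DKtinv k q = DKtinv k q * DK k q :=
  (comm_helper rKtKti rKtiKt rKKt).symm

theorem rKiKt : DKt k q * DKinv k q = DKinv k q * DKt k q :=
  (comm_helper rKKi rKiK rKKt.symm).symm

theorem rKiKti : DKinv k q * DKtinv k q = DKtinv k q * DKinv k q :=
  (comm_helper rKtKti rKtiKt rKiKt.symm).symm

/-! Primed versions (with an extra right factor). -/

theorem rKE' (x : Dq k q) : DK k q * (DE k q * x) = (q ^ 2) • (DE k q * (DK k q * x)) := by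
  rw [← mul_assoc, rKE, smul_mul_assoc, mul_assoc]

theorem rKF' (x : Dq k q) : DK k q * (DF k q * x) = ((q ^ 2)⁻¹) • (DF k q * (DK k q * x)) := by
  rw [← mul_assoc, rKF, smul_mul_assoc, mul_assoc]

theorem rKtE' (x : Dq k q) : DKt k q * (DE k q * x) = (q ^ 2) • (DE k q * (DKt k q * x)) := by
  rw [← mul_assoc, rKtE, smul_mul_assoc, mul_assoc]

theorem rKtF' (x : Dq k q) : DKt k q * (DF k q * x) = ((q ^ 2)⁻¹) • (DF k q * (DKt k q * x)) := by
  rw [← mul_assoc, rKtF, smul_mul_assoc, mul_assoc]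

theorem rKiE' (hq0 : q ≠ 0) (x : Dq k q) :
    DKinv k q * (DE k q * x) = ((q ^ 2)⁻¹) • (DE k q * (DKinv k q * x)) := by
  rw [← mul_assoc, rKiE hq0, smul_mul_assoc, mul_assoc]

theorem rKiF' (hq0 : q ≠ 0) (x : Dq k q) :
    DKinv k q * (DF k q * x) = (q ^ 2) • (DF k q * (DKinv k q * x)) := by
  rw [← mul_assoc, rKiF hq0, smul_mul_assoc, mul_assoc]

theorem rKtiE' (hq0 : q ≠ 0) (x : Dq k q) :
    DKtinv k q * (DE k q * x) = ((q ^ 2)⁻¹) • (DE k q * (DKtinv k q * x)) := by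
  rw [← mul_assoc, rKtiE hq0, smul_mul_assoc, mul_assoc]

theorem rKtiF' (hq0 : q ≠ 0) (x : Dq k q) :
    DKtinv k q * (DF k q * x) = (q ^ 2) • (DF k q * (DKtinv k q * x)) := by
  rw [← mul_assoc, rKtiF hq0, smul_mul_assoc, mul_assoc]

theorem rKKi' (x : Dq k q) : DK k q * (DKinv k q * x) = x := by
  rw [← mul_assoc, rKKi, one_mul]

theorem rKiK' (x : Dq k q) : DKinv k q * (DK k q * x) = x := by
  rw [← mul_assoc, rKiK, one_mul]

theorem rKtKti' (x : Dq k q) : DKt k q * (DKtinv k q * x) = x := by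
  rw [← mul_assoc, rKtKti, one_mul]

theorem rKtiKt' (x : Dq k q) : DKtinv k q * (DKt k q * x) = x := by
  rw [← mul_assoc, rKtiKt, one_mul]

theorem rKKt' (x : Dq k q) : DK k q * (DKt k q * x) = DKt k q * (DK k q * x) := by
  rw [← mul_assoc, rKKt, mul_assoc]

theorem rKKti' (x : Dq k q) : DK k q * (DKtinv k q * x) = DKtinv k q * (DK k q * x) := by
  rw [← mul_assoc, rKKti, mul_assoc]

theorem rKiKti' (x : Dq k q) : DKinv k q * (DKtinv k q * x) = DKtinv k q * (DKinv k q * x) := by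
  rw [← mul_assoc, rKiKti, mul_assoc]

theorem rEF' (x : Dq k q) : DE k q * (DF k q * x) =
    DF k q * (DE k q * x) + ((q - q⁻¹)⁻¹) • (DK k q * x - DKtinv k q * x) := by
  rw [← mul_assoc, rEF, add_mul, smul_mul_assoc, sub_mul, mul_assoc]

/-- An element commuting with all six generators is central. -/
theorem central_of (c : Dq k q)
    (hE : c * DE k q = DE k q * c) (hF : c * DF k q = DF k q * c)
    (hK : c * DK k q = DK k q * c) (hKi : c * DKinv k q = DKinv k q * c)
    (hKt : c * DKt k q = DKt k q * c) (hKti : c * DKtinv k q = DKtinv k q * c) :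
    ∀ x : Dq k q, c * x = x * c := by
  intro x
  obtain ⟨a, rfl⟩ := RingQuot.mkAlgHom_surjective k (DRel k q) x
  induction a using FreeAlgebra.induction with
  | grade0 r =>
    rw [AlgHom.commutes]
    exact (Algebra.commutes r c).symm
  | grade1 g =>
    cases g
    · exact hE
    · exact hF
    · exact hK
    · exact hKi
    · exact hKt
    · exact hKti
  | mul a b ha hb =>
    rw [map_mul, ← mul_assoc, ha, mul_assoc, hb, mul_assoc]
  | add a b ha hb =>
    rw [map_add, mul_add, add_mul, ha, hb]

end CasimirAux

open CasimirAux in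
/-- the Casimir element `C = FE + (Kq + K̃⁻¹q⁻¹)/(q − q⁻¹)²` equals
`EF + (Kq⁻¹ + K̃⁻¹q)/(q − q⁻¹)²` and is central in `D_q`; the element `KK̃⁻¹` is
central as well. -/
theorem casimir_central (k : Type) [Field k] (q : k)
    (hq0 : q ≠ 0) (hq1 : q ^ 2 ≠ 1) :
    (DF k q * DE k q + ((q - q⁻¹) ^ 2)⁻¹ • (q • DK k q + q⁻¹ • DKtinv k q) =
      DE k q * DF k q + ((q - q⁻¹) ^ 2)⁻¹ • (q⁻¹ • DK k q + q • DKtinv k q)) ∧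
    (∀ x : Dq k q,
      (DF k q * DE k q + ((q - q⁻¹) ^ 2)⁻¹ • (q • DK k q + q⁻¹ • DKtinv k q)) * x =
        x * (DF k q * DE k q + ((q - q⁻¹) ^ 2)⁻¹ • (q • DK k q + q⁻¹ • DKtinv k q))) ∧
    (∀ x : Dq k q,
      (DK k q * DKtinv k q) * x = x * (DK k q * DKtinv k q)) := by
  have hs : q - q⁻¹ ≠ 0 := by
    intro h
    apply hq1
    have h' : (q - q⁻¹) * q = 0 * q := by rw [h]
    rw [sub_mul, inv_mul_cancel₀ hq0, zero_mul, sub_eq_zero] at h'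
    rw [sq]
    exact h'
  have hq1' : q ^ 2 - 1 ≠ 0 := sub_ne_zero.mpr hq1
  have key : q - q⁻¹ = (q ^ 2 - 1) * q⁻¹ := by field_simp
  refine ⟨?_, ?_, ?_⟩
  · simp only [rEF]
    match_scalars <;> (try simp only [key]) <;> (try field_simp) <;> (try ring)
  · apply central_of
    · simp only [add_mul, mul_add, smul_add, smul_sub, sub_mul, mul_sub, smul_mul_assoc,
        mul_smul_comm, smul_smul, mul_assoc, mul_one, one_mul,
        rEF, rEF', rKE, rKE', rKF, rKF', rKtE, rKtE', rKtF, rKtF',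
        rKiE hq0, rKiE' hq0, rKiF hq0, rKiF' hq0, rKtiE hq0, rKtiE' hq0, rKtiF hq0, rKtiF' hq0,
        rKKi, rKKi', rKiK, rKiK', rKtKti, rKtKti', rKtiKt, rKtiKt',
        rKKt, rKKt', rKKti, rKKti', rKiKti, rKiKti']
      match_scalars <;> (try simp only [key]) <;> (try field_simp) <;> (try ring)
    · simp only [add_mul, mul_add, smul_add, smul_sub, sub_mul, mul_sub, smul_mul_assoc,
        mul_smul_comm, smul_smul, mul_assoc, mul_one, one_mul,
        rEF, rEF', rKE, rKE', rKF, rKF', rKtE, rKtE', rKtF, rKtF',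
        rKiE hq0, rKiE' hq0, rKiF hq0, rKiF' hq0, rKtiE hq0, rKtiE' hq0, rKtiF hq0, rKtiF' hq0,
        rKKi, rKKi', rKiK, rKiK', rKtKti, rKtKti', rKtiKt, rKtiKt',
        rKKt, rKKt', rKKti, rKKti', rKiKti, rKiKti']
      match_scalars <;> (try simp only [key]) <;> (try field_simp) <;> (try ring)
    · simp only [add_mul, mul_add, smul_add, smul_sub, sub_mul, mul_sub, smul_mul_assoc,
        mul_smul_comm, smul_smul, mul_assoc, mul_one, one_mul,
        rEF, rEF', rKE, rKE', rKF, rKF', rKtE, rKtE', rKtF, rKtF',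
        rKiE hq0, rKiE' hq0, rKiF hq0, rKiF' hq0, rKtiE hq0, rKtiE' hq0, rKtiF hq0, rKtiF' hq0,
        rKKi, rKKi', rKiK, rKiK', rKtKti, rKtKti', rKtiKt, rKtiKt',
        rKKt, rKKt', rKKti, rKKti', rKiKti, rKiKti']
      match_scalars <;> (try simp only [key]) <;> (try field_simp) <;> (try ring)
    · simp only [add_mul, mul_add, smul_add, smul_sub, sub_mul, mul_sub, smul_mul_assoc,
        mul_smul_comm, smul_smul, mul_assoc, mul_one, one_mul,
        rEF, rEF', rKE, rKE', rKF, rKF', rKtE, rKtE', rKtF, rKtF',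
        rKiE hq0, rKiE' hq0, rKiF hq0, rKiF' hq0, rKtiE hq0, rKtiE' hq0, rKtiF hq0, rKtiF' hq0,
        rKKi, rKKi', rKiK, rKiK', rKtKti, rKtKti', rKtiKt, rKtiKt',
        rKKt, rKKt', rKKti, rKKti', rKiKti, rKiKti']
      match_scalars <;> (try simp only [key]) <;> (try field_simp) <;> (try ring)
    · simp only [add_mul, mul_add, smul_add, smul_sub, sub_mul, mul_sub, smul_mul_assoc,
        mul_smul_comm, smul_smul, mul_assoc, mul_one, one_mul,
        rEF, rEF', rKE, rKE', rKF, rKF', rKtE, rKtE', rKtF, rKtF',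
        rKiE hq0, rKiE' hq0, rKiF hq0, rKiF' hq0, rKtiE hq0, rKtiE' hq0, rKtiF hq0, rKtiF' hq0,
        rKKi, rKKi', rKiK, rKiK', rKtKti, rKtKti', rKtiKt, rKtiKt',
        rKKt, rKKt', rKKti, rKKti', rKiKti, rKiKti']
      match_scalars <;> (try simp only [key]) <;> (try field_simp) <;> (try ring)
    · simp only [add_mul, mul_add, smul_add, smul_sub, sub_mul, mul_sub, smul_mul_assoc,
        mul_smul_comm, smul_smul, mul_assoc, mul_one, one_mul,
        rEF, rEF', rKE, rKE', rKF, rKF', rKtE, rKtE', rKtF, rKtF',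
        rKiE hq0, rKiE' hq0, rKiF hq0, rKiF' hq0, rKtiE hq0, rKtiE' hq0, rKtiF hq0, rKtiF' hq0,
        rKKi, rKKi', rKiK, rKiK', rKtKti, rKtKti', rKtiKt, rKtiKt',
        rKKt, rKKt', rKKti, rKKti', rKiKti, rKiKti']
      match_scalars <;> (try simp only [key]) <;> (try field_simp) <;> (try ring)
  · apply central_of
    all_goals
      simp only [add_mul, mul_add, smul_add, smul_sub, sub_mul, mul_sub, smul_mul_assoc,
        mul_smul_comm, smul_smul, mul_assoc, mul_one, one_mul,
        rEF, rEF', rKE, rKE', rKF, rKF', rKtE, rKtE', rKtF, rKtF',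
        rKiE hq0, rKiE' hq0, rKiF hq0, rKiF' hq0, rKtiE hq0, rKtiE' hq0, rKtiF hq0, rKtiF' hq0,
        rKKi, rKKi', rKiK, rKiK', rKtKti, rKtKti', rKtiKt, rKtiKt',
        rKKt, rKKt', rKKti, rKKti', rKiKti, rKiKti']
    all_goals try rfl
    all_goals match_scalars <;> (try simp only [key]) <;> (try field_simp) <;> (try ring)
end
end

section
/- Let M be the d² × d² matrix with rows and columns indexed by pairs (a,b) with 0 ≤ a, b ≤ d−1, whose ((a,b),(a',b'))-entry is δ_{a,a'} · q^{−2bb'} · [a]_q! · (1/(1−q²))^a. (This is the Gram matrix, in the monomial bases {E^aK^b} and {F^{a'}K^{b'}}, of the skew Hopf pairing between the d²-dimensional quotient Hopf algebras Ū_q^{≥0} = U_q^{≥0}/(E^d, K^d−1) and Ū_q^{≤0} = U_q^{≤0}/(F^d, K^d−1).) Then M is invertible; equivalently, if scalars λ_{a,b} ∈ k (0 ≤ a, b < d) satisfy Σ_{0≤b<d} λ_{a',b} · q^{−2bb'} · [a']_q! · (1/(1−q²))^{a'} = 0 for all 0 ≤ a', b' < d, then λ_{a,b} = 0 for all a, b.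 -/
noncomputable section

/-- The Gram matrix of the skew Hopf pairing between the `d²`-dimensional quotient
Hopf algebras `Ū_q^{≥0}` and `Ū_q^{≤0}` in the monomial bases `{E^a K^b}`, `{F^{a'} K^{b'}}`:
its `((a,b),(a',b'))`-entry is `δ_{a,a'}·q^{−2bb'}·[a]_q!·(1/(1−q²))^a`. -/
def gramM (k : Type) [Field k] (q : k) (d : ℕ) :
    Matrix (Fin d × Fin d) (Fin d × Fin d) k :=
  fun p p' =>
    if p.1 = p'.1 then
      q ^ (-(2 * ((p.2 : ℕ) : ℤ) * ((p'.2 : ℕ) : ℤ))) * qfact k q (p.1 : ℕ) *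
        ((1 - q ^ 2)⁻¹) ^ ((p.1 : ℕ))
    else 0

lemma qpow_neg2 (k : Type) [Field k] (q : k) (hq0 : q ≠ 0) (b b' : ℕ) :
    q ^ (-(2 * (b : ℤ) * (b' : ℤ))) = (((q ^ 2)⁻¹) ^ b) ^ b' := by
  have : (-(2 * (b : ℤ) * (b' : ℤ))) = -(((2 * b * b' : ℕ) : ℤ)) := by push_cast; ring
  rw [this, zpow_neg, zpow_natCast, ← pow_mul, inv_pow, ← pow_mul, mul_assoc]

lemma qfact_ne_zero (k : Type) [Field k] (q : k) (d : ℕ)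
    (hq0 : q ≠ 0) (hq : IsPrimitiveRoot (q ^ 2) d) (hd : 1 < d) :
    ∀ m, m < d → qfact k q m ≠ 0 := by
  have hq2 : q ^ 2 ≠ 1 := hq.ne_one hd
  have hden : q - q⁻¹ ≠ 0 := by
    intro h
    apply hq2
    have h' := sub_eq_zero.mp h
    rw [sq]
    nth_rewrite 2 [h']
    exact mul_inv_cancel₀ hq0
  intro m hm
  induction m with
  | zero => simp [qfact]
  | succ n ih =>
    rw [qfact]
    apply mul_ne_zero (ih (lt_trans (Nat.lt_succ_self n) hm))
    rw [qint]
    apply div_ne_zero _ hden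
    intro h
    have h1 : (q ^ 2) ^ (n + 1) = 1 := by
      have h' := sub_eq_zero.mp h
      rw [inv_pow] at h'
      have hqn : q ^ (n+1) ≠ 0 := pow_ne_zero _ hq0
      rw [← pow_mul, show 2 * (n+1) = (n+1) + (n+1) from by ring, pow_add]
      nth_rewrite 2 [h']
      exact mul_inv_cancel₀ hqn
    exact hq.pow_ne_one_of_pos_of_lt (Nat.succ_ne_zero n) hm h1

/-- if `q²` is a primitive `d`-th root of unity (`d > 1`), the Gram matrix
of the skew Hopf pairing is invertible; equivalently the corresponding homogeneous linear
system has only the trivial solution. -/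
theorem gram_matrix_invertible (k : Type) [Field k] (q : k) (d : ℕ)
    (hd : 1 < d) (hq0 : q ≠ 0) (hq : IsPrimitiveRoot (q ^ 2) d) :
    IsUnit (gramM k q d) ∧
    (∀ lam : Fin d → Fin d → k,
      (∀ a' b' : Fin d,
        ∑ b : Fin d,
          lam a' b * q ^ (-(2 * ((b : ℕ) : ℤ) * ((b' : ℕ) : ℤ))) * qfact k q (a' : ℕ) *
            ((1 - q ^ 2)⁻¹) ^ ((a' : ℕ)) = 0) →
      ∀ a b : Fin d, lam a b = 0) := by
  have hq2ne1 : q ^ 2 ≠ 1 := hq.ne_one hd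
  set c : Fin d → k := fun a => qfact k q (a : ℕ) * ((1 - q ^ 2)⁻¹) ^ ((a : ℕ)) with hc
  set v : Fin d → k := fun b => ((q ^ 2)⁻¹) ^ (b : ℕ) with hv
  have hcne : ∀ a : Fin d, c a ≠ 0 := by
    intro a
    apply mul_ne_zero (qfact_ne_zero k q d hq0 hq hd a a.2)
    exact pow_ne_zero _ (inv_ne_zero (sub_ne_zero.mpr (Ne.symm hq2ne1)))
  have hvinj : Function.Injective v := by
    intro i j h
    exact Fin.ext (hq.inv.pow_inj i.2 j.2 h)
  have key : gramM k q d =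
      (Matrix.blockDiagonal (fun a : Fin d => c a • Matrix.vandermonde v)).submatrix
        (Equiv.prodComm (Fin d) (Fin d)) (Equiv.prodComm (Fin d) (Fin d)) := by
    ext ⟨a, b⟩ ⟨a', b'⟩
    simp only [gramM, Matrix.submatrix_apply, Equiv.prodComm_apply, Prod.swap_prod_mk,
      Matrix.blockDiagonal_apply, Matrix.smul_apply, Matrix.vandermonde_apply, smul_eq_mul]
    by_cases h : a = a'
    · simp only [h, if_true]
      rw [qpow_neg2 k q hq0]
      ring
    · simp [h]
  have hdet : IsUnit (gramM k q d).det := by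
    rw [key, Matrix.det_submatrix_equiv_self, Matrix.det_blockDiagonal]
    rw [isUnit_iff_ne_zero]
    apply Finset.prod_ne_zero_iff.mpr
    intro a _
    rw [Matrix.det_smul, Matrix.det_vandermonde]
    apply mul_ne_zero (pow_ne_zero _ (hcne a))
    apply Finset.prod_ne_zero_iff.mpr
    intro i _
    apply Finset.prod_ne_zero_iff.mpr
    intro j hj
    exact sub_ne_zero.mpr (fun h => (Finset.mem_Ioi.mp hj).ne' (hvinj h))
  have hU : IsUnit (gramM k q d) := (Matrix.isUnit_iff_isUnit_det _).mpr hdet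
  refine ⟨hU, ?_⟩
  intro lam hlam a b
  set x : Fin d × Fin d → k := fun p => lam p.1 p.2 with hx
  have hvm : Matrix.vecMul x (gramM k q d) = 0 := by
    funext p'
    obtain ⟨a', b'⟩ := p'
    have := hlam a' b'
    simp only [Matrix.vecMul, dotProduct, Pi.zero_apply]
    rw [Fintype.sum_prod_type]
    rw [Finset.sum_eq_single a']
    · simpa [gramM, mul_assoc] using this
    · intro a'' _ hne
      apply Finset.sum_eq_zero
      intro b'' _
      simp [gramM, hne]
    · intro h; exact absurd (Finset.mem_univ a') h
  have : x = 0 := by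
    have h1 : Matrix.vecMul x ((gramM k q d) * (gramM k q d)⁻¹) = 0 := by
      rw [← Matrix.vecMul_vecMul, hvm, Matrix.zero_vecMul]
    rwa [Matrix.mul_nonsing_inv _ hdet, Matrix.vecMul_one] at h1
  exact congrFun this (a, b)
end
end

section
/- Assume k is algebraically closed, d > 1 and q² is a primitive d-th root of unity. Let ρ : D_q → End_k(V) be a finite-dimensional simple representation such that ρ(K) and ρ(K̃) are diagonalizable and ρ(E)^d = 0 = ρ(F)^d. Then V is isomorphic as a D_q-module either to Z(w,λ) for some w, λ ∈ k^× with λ^{2d} ≠ 1, or to L(w,n) for some w ∈ k^× and some integer 0 ≤ n < d. -/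
noncomputable section

/-- Action of `K` on `Z(w,λ)`: `K·m_i = wλq^{−2i}·m_i` (`d`-dimensional space). -/
def zK (k : Type) [Field k] (q w lam : k) (d : ℕ) : (Fin d →₀ k) →ₗ[k] (Fin d →₀ k) :=
  Finsupp.lift (Fin d →₀ k) k (Fin d) fun i =>
    (w * lam * q ^ (-(2 * ((i : ℕ) : ℤ)))) • Finsupp.single i 1

/-- Action of `K⁻¹` on `Z(w,λ)`. -/
def zKinv (k : Type) [Field k] (q w lam : k) (d : ℕ) : (Fin d →₀ k) →ₗ[k] (Fin d →₀ k) :=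
  Finsupp.lift (Fin d →₀ k) k (Fin d) fun i =>
    ((w * lam * q ^ (-(2 * ((i : ℕ) : ℤ))))⁻¹) • Finsupp.single i 1

/-- Action of `K̃` on `Z(w,λ)`: `K̃·m_i = w⁻¹λq^{−2i}·m_i`. -/
def zKt (k : Type) [Field k] (q w lam : k) (d : ℕ) : (Fin d →₀ k) →ₗ[k] (Fin d →₀ k) :=
  Finsupp.lift (Fin d →₀ k) k (Fin d) fun i =>
    (w⁻¹ * lam * q ^ (-(2 * ((i : ℕ) : ℤ)))) • Finsupp.single i 1

/-- Action of `K̃⁻¹` on `Z(w,λ)`. -/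
def zKtinv (k : Type) [Field k] (q w lam : k) (d : ℕ) : (Fin d →₀ k) →ₗ[k] (Fin d →₀ k) :=
  Finsupp.lift (Fin d →₀ k) k (Fin d) fun i =>
    ((w⁻¹ * lam * q ^ (-(2 * ((i : ℕ) : ℤ))))⁻¹) • Finsupp.single i 1

/-- Action of `F` on `Z(w,λ)`: `F·m_i = m_{i+1}` with `m_d := 0`. -/
def zF (k : Type) [Field k] (d : ℕ) : (Fin d →₀ k) →ₗ[k] (Fin d →₀ k) :=
  Finsupp.lift (Fin d →₀ k) k (Fin d) fun i =>
    if h : (i : ℕ) + 1 < d then Finsupp.single (⟨(i : ℕ) + 1, h⟩ : Fin d) 1 else 0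

/-- Action of `E` on `Z(w,λ)`: `E·m_0 = 0`,
`E·m_i = [i]_q·w·(λq^{1−i} − λ⁻¹q^{i−1})/(q − q⁻¹)·m_{i−1}`. -/
def zE (k : Type) [Field k] (q w lam : k) (d : ℕ) : (Fin d →₀ k) →ₗ[k] (Fin d →₀ k) :=
  Finsupp.lift (Fin d →₀ k) k (Fin d) fun i =>
    if (i : ℕ) = 0 then 0
    else
      (qint k q (i : ℕ) * w *
          (lam * q ^ (1 - ((i : ℕ) : ℤ)) - lam⁻¹ * q ^ (((i : ℕ) : ℤ) - 1)) / (q - q⁻¹)) •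
        Finsupp.single
          (⟨(i : ℕ) - 1, Nat.lt_of_le_of_lt (Nat.sub_le _ _) i.isLt⟩ : Fin d) 1

/-- `ρ` realizes the `d`-dimensional module `Z(w,λ)` on `Fin d →₀ k`. -/
def ZCond (k : Type) [Field k] (q w lam : k) (d : ℕ)
    (ρ : Dq k q →ₐ[k] Module.End k (Fin d →₀ k)) : Prop :=
  ρ (DE k q) = zE k q w lam d ∧ ρ (DF k q) = zF k d ∧
  ρ (DK k q) = zK k q w lam d ∧ ρ (DKinv k q) = zKinv k q w lam d ∧
  ρ (DKt k q) = zKt k q w lam d ∧ ρ (DKtinv k q) = zKtinv k q w lam d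

namespace ClassAux

variable {k : Type} [Field k]

/-- Conjugation by a linear equivalence as an algebra equivalence of endomorphism algebras. -/
def endCongr {V W : Type} [AddCommGroup V] [Module k V] [AddCommGroup W] [Module k W]
    (e : V ≃ₗ[k] W) : Module.End k V ≃ₐ[k] Module.End k W :=
  AlgEquiv.ofLinearEquiv e.conj (e.conj_id)
    (fun f g => e.conj_comp g f)

lemma endCongr_apply {V W : Type} [AddCommGroup V] [Module k V] [AddCommGroup W] [Module k W]
    (e : V ≃ₗ[k] W) (f : Module.End k V) (x : W) :
    endCongr e f x = e (f (e.symm x)) :=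
  e.conj_apply_apply f x

variable (q : k)

lemma DqKE : DK k q * DE k q = q ^ 2 • (DE k q * DK k q) := by
  rw [DK, DE, ← map_mul, RingQuot.mkAlgHom_rel k DRel.KE, map_smul, map_mul]

lemma DqKF : DK k q * DF k q = (q ^ 2)⁻¹ • (DF k q * DK k q) := by
  rw [DK, DF, ← map_mul, RingQuot.mkAlgHom_rel k DRel.KF, map_smul, map_mul]

lemma DqKtE : DKt k q * DE k q = q ^ 2 • (DE k q * DKt k q) := by
  rw [DKt, DE, ← map_mul, RingQuot.mkAlgHom_rel k DRel.KtE, map_smul, map_mul]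

lemma DqKtF : DKt k q * DF k q = (q ^ 2)⁻¹ • (DF k q * DKt k q) := by
  rw [DKt, DF, ← map_mul, RingQuot.mkAlgHom_rel k DRel.KtF, map_smul, map_mul]

lemma DqKKinv : DK k q * DKinv k q = 1 := by
  rw [DK, DKinv, ← map_mul, RingQuot.mkAlgHom_rel k DRel.KKinv, map_one]

lemma DqKinvK : DKinv k q * DK k q = 1 := by
  rw [DK, DKinv, ← map_mul, RingQuot.mkAlgHom_rel k DRel.KinvK, map_one]

lemma DqKtKtinv : DKt k q * DKtinv k q = 1 := by
  rw [DKt, DKtinv, ← map_mul, RingQuot.mkAlgHom_rel k DRel.KtKtinv, map_one]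

lemma DqKtinvKt : DKtinv k q * DKt k q = 1 := by
  rw [DKt, DKtinv, ← map_mul, RingQuot.mkAlgHom_rel k DRel.KtinvKt, map_one]

lemma DqKKt : DK k q * DKt k q = DKt k q * DK k q := by
  rw [DK, DKt, ← map_mul, RingQuot.mkAlgHom_rel k DRel.KKt, map_mul]

lemma DqEF : DE k q * DF k q =
    DF k q * DE k q + (q - q⁻¹)⁻¹ • (DK k q - DKtinv k q) := by
  rw [DE, DF, ← map_mul, RingQuot.mkAlgHom_rel k DRel.EF, map_add, map_mul, map_smul, map_sub]
  rfl

end ClassAux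

namespace ClassAux

variable {k : Type} [Field k] {q : k}

lemma sub_inv_ne (hq0 : q ≠ 0) (hq2 : q ^ 2 ≠ 1) : q - q⁻¹ ≠ 0 := by
  intro h
  apply hq2
  have h1 : q = q⁻¹ := sub_eq_zero.mp h
  calc q ^ 2 = q * q := sq q
  _ = q * q⁻¹ := by nth_rewrite 2 [h1]; rfl
  _ = 1 := mul_inv_cancel₀ hq0

/-- The scalar `c_i` with `E·m_i = c_i·m_{i-1}`, for highest weight `(μ, ν)`;
here `b` stands for `ν⁻¹`. -/
def cc (q μ b : k) (i : ℕ) : k :=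
  qint k q i * (q ^ (1 - (i : ℤ)) * μ - q ^ ((i : ℤ) - 1) * b) / (q - q⁻¹)

lemma cc_zero (μ b : k) : cc q μ b 0 = 0 := by simp [cc, qint]

lemma cc_succ (hq0 : q ≠ 0) (hqq : q - q⁻¹ ≠ 0) (μ b : k) (i : ℕ) :
    cc q μ b (i + 1) =
      cc q μ b i + (q - q⁻¹)⁻¹ * (μ * ((q ^ 2)⁻¹) ^ i - b * (q ^ 2) ^ i) := by
  have hQ : (q : k) ^ i ≠ 0 := pow_ne_zero _ hq0
  have main : (q ^ (i+1) - (q ^ (i+1))⁻¹) * (q ^ (-(i:ℤ)) * μ - q ^ ((i:ℤ)) * b)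
      = (q ^ i - (q ^ i)⁻¹) * (q ^ (1 - (i:ℤ)) * μ - q ^ ((i:ℤ) - 1) * b)
        + (q - q⁻¹) * (μ * ((q ^ 2)⁻¹) ^ i - b * (q ^ 2) ^ i) := by
    rw [zpow_neg, zpow_natCast, zpow_sub₀ hq0, zpow_sub₀ hq0,
        show ((q^2)⁻¹ : k)^i = ((q^i)^2)⁻¹ by rw [inv_pow, ← pow_mul, ← pow_mul, mul_comm],
        show ((q^2 : k))^i = (q^i)^2 by rw [← pow_mul, ← pow_mul, mul_comm]]
    simp only [zpow_natCast, zpow_one]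
    field_simp
    ring
  unfold cc qint
  push_cast
  rw [inv_pow, inv_pow]
  rw [show (1:ℤ) - ((i:ℤ)+1) = -(i:ℤ) by ring, show ((i:ℤ)+1) - 1 = (i:ℤ) by ring]
  rw [div_mul_eq_mul_div, div_div, div_mul_eq_mul_div, div_div]
  rw [show (q - q⁻¹)⁻¹ * (μ * ((q ^ 2)⁻¹) ^ i - b * (q ^ 2) ^ i)
      = ((q - q⁻¹) * (μ * ((q ^ 2)⁻¹) ^ i - b * (q ^ 2) ^ i)) / ((q - q⁻¹) * (q - q⁻¹)) by
    rw [mul_div_mul_left _ _ hqq, inv_mul_eq_div]]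
  rw [← add_div, main]

lemma cc_L (hq0 : q ≠ 0) (w : k) (n i : ℕ) (hi : i ≤ n + 1) :
    cc q (w * q ^ (n : ℤ)) (w * q ^ (-(n : ℤ))) i = w * qint k q i * qint k q (n + 1 - i) := by
  have hcast : ((n + 1 - i : ℕ) : ℤ) = (n : ℤ) + 1 - (i : ℤ) := by omega
  have e1 : q ^ (1 - (i : ℤ)) * (w * q ^ (n : ℤ)) = w * q ^ ((n : ℤ) + 1 - (i : ℤ)) := by
    rw [show (n : ℤ) + 1 - (i : ℤ) = (1 - (i : ℤ)) + (n : ℤ) by ring, zpow_add₀ hq0]; ring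
  have e2 : q ^ ((i : ℤ) - 1) * (w * q ^ (-(n : ℤ))) = w * q ^ (-((n : ℤ) + 1 - (i : ℤ))) := by
    rw [show -((n : ℤ) + 1 - (i : ℤ)) = ((i : ℤ) - 1) + (-(n : ℤ)) by ring, zpow_add₀ hq0]; ring
  have e3 : (q : k) ^ ((n + 1 - i : ℕ)) = q ^ ((n : ℤ) + 1 - (i : ℤ)) := by
    rw [← zpow_natCast, hcast]
  have e4 : (q⁻¹ : k) ^ ((n + 1 - i : ℕ)) = q ^ (-((n : ℤ) + 1 - (i : ℤ))) := by
    rw [inv_pow, ← zpow_natCast, hcast, ← zpow_neg]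
  unfold cc qint
  rw [e1, e2, e3, e4]
  ring

lemma qint_ne_zero (hq0 : q ≠ 0) (hqq : q - q⁻¹ ≠ 0) {d i : ℕ}
    (hq : IsPrimitiveRoot (q ^ 2) d) (h0 : 0 < i) (hi : i < d) : qint k q i ≠ 0 := by
  unfold qint
  apply div_ne_zero _ hqq
  intro h
  apply hq.pow_ne_one_of_pos_of_lt h0.ne' hi
  have h1 : q ^ i = q⁻¹ ^ i := sub_eq_zero.mp h
  calc (q ^ 2) ^ i = q ^ i * q ^ i := by rw [← pow_mul, two_mul, pow_add]
  _ = q ^ i * q⁻¹ ^ i := by rw [← h1]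
  _ = 1 := by rw [inv_pow, mul_inv_cancel₀ (pow_ne_zero _ hq0)]

lemma qpow2_inv (hq0 : q ≠ 0) (i : ℕ) : ((q ^ 2)⁻¹ : k) ^ i = q ^ (-(2 * (i : ℤ))) := by
  rw [inv_pow, ← pow_mul, ← zpow_natCast, ← zpow_neg]
  push_cast; ring_nf

lemma qpow2' (i : ℕ) : ((q ^ 2 : k)) ^ i = q ^ (2 * (i : ℤ)) := by
  rw [← pow_mul, ← zpow_natCast]
  push_cast; ring_nf

lemma invariant_of_gen {V : Type} [AddCommGroup V] [Module k V]
    (ρ : Dq k q →ₐ[k] Module.End k V) (W : Submodule k V)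
    (hE : ∀ u ∈ W, ρ (DE k q) u ∈ W) (hF : ∀ u ∈ W, ρ (DF k q) u ∈ W)
    (hK : ∀ u ∈ W, ρ (DK k q) u ∈ W) (hKi : ∀ u ∈ W, ρ (DKinv k q) u ∈ W)
    (hKt : ∀ u ∈ W, ρ (DKt k q) u ∈ W) (hKti : ∀ u ∈ W, ρ (DKtinv k q) u ∈ W) :
    ∀ x : Dq k q, ∀ u ∈ W, ρ x u ∈ W := by
  intro x
  obtain ⟨y, rfl⟩ := RingQuot.mkAlgHom_surjective k (DRel k q) x
  induction y using FreeAlgebra.induction with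
  | grade0 r =>
      intro u hu
      rw [AlgHom.commutes, AlgHom.commutes, Module.algebraMap_end_apply]
      exact W.smul_mem r hu
  | grade1 g =>
      cases g
      · exact hE
      · exact hF
      · exact hK
      · exact hKi
      · exact hKt
      · exact hKti
  | mul a b ha hb =>
      intro u hu
      rw [map_mul, map_mul, Module.End.mul_apply]
      exact ha _ (hb _ hu)
  | add a b ha hb =>
      intro u hu
      rw [map_add, map_add, LinearMap.add_apply]
      exact W.add_mem (ha u hu) (hb u hu)

end ClassAux

set_option maxHeartbeats 2000000
/-- at a primitive `d`-th root of unity `q²`, every finite-dimensional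
simple weight `D_q`-module killed by `E^d` and `F^d` is isomorphic to some `Z(w,λ)`
with `λ^{2d} ≠ 1` or to some `L(w,n)` with `0 ≤ n < d`. -/
theorem classification_root_of_unity (k : Type) [Field k] [IsAlgClosed k]
    (q : k) (hq0 : q ≠ 0) (d : ℕ) (hd : 1 < d) (hq : IsPrimitiveRoot (q ^ 2) d)
    (V : Type) [AddCommGroup V] [Module k V] [FiniteDimensional k V] [Nontrivial V]
    (ρ : Dq k q →ₐ[k] Module.End k V)
    (hsimple : ∀ W : Submodule k V, (∀ (x : Dq k q), ∀ v ∈ W, ρ x v ∈ W) → W = ⊥ ∨ W = ⊤)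
    (hKdiag : (⨆ μ : k, (ρ (DK k q)).eigenspace μ) = ⊤)
    (hKtdiag : (⨆ μ : k, (ρ (DKt k q)).eigenspace μ) = ⊤)
    (hEd : ρ (DE k q) ^ d = 0) (hFd : ρ (DF k q) ^ d = 0) :
    (∃ w lam : k, w ≠ 0 ∧ lam ≠ 0 ∧ lam ^ (2 * d) ≠ 1 ∧
      ∃ ρ' : Dq k q →ₐ[k] Module.End k (Fin d →₀ k), ZCond k q w lam d ρ' ∧
        ∃ e : V ≃ₗ[k] (Fin d →₀ k),
          ∀ (x : Dq k q) (v : V), e (ρ x v) = ρ' x (e v)) ∨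
    (∃ w : k, w ≠ 0 ∧ ∃ n : ℕ, n < d ∧
      ∃ ρ' : Dq k q →ₐ[k] Module.End k (Fin (n + 1) →₀ k), LCond k q w n ρ' ∧
        ∃ e : V ≃ₗ[k] (Fin (n + 1) →₀ k),
          ∀ (x : Dq k q) (v : V), e (ρ x v) = ρ' x (e v)) := by
  classical
  have hq2ne1 : q ^ 2 ≠ 1 := hq.ne_one hd
  have hq20 : (q : k) ^ 2 ≠ 0 := pow_ne_zero _ hq0
  have hqq : q - q⁻¹ ≠ 0 := ClassAux.sub_inv_ne hq0 hq2ne1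
  set A := ρ (DE k q) with hA
  set B := ρ (DF k q) with hB
  set C := ρ (DK k q) with hC
  set C' := ρ (DKinv k q) with hC'
  set T := ρ (DKt k q) with hT
  set T' := ρ (DKtinv k q) with hT'
  have rKE : C * A = q ^ 2 • (A * C) := by
    have h := congrArg ρ (ClassAux.DqKE q); rw [map_mul, map_smul, map_mul] at h; exact h
  have rKF : C * B = (q ^ 2)⁻¹ • (B * C) := by
    have h := congrArg ρ (ClassAux.DqKF q); rw [map_mul, map_smul, map_mul] at h; exact h
  have rKtE : T * A = q ^ 2 • (A * T) := by
    have h := congrArg ρ (ClassAux.DqKtE q); rw [map_mul, map_smul, map_mul] at h; exact h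
  have rKtF : T * B = (q ^ 2)⁻¹ • (B * T) := by
    have h := congrArg ρ (ClassAux.DqKtF q); rw [map_mul, map_smul, map_mul] at h; exact h
  have rKiK : C' * C = 1 := by
    have h := congrArg ρ (ClassAux.DqKinvK q); rw [map_mul, map_one] at h; exact h
  have rKtiKt : T' * T = 1 := by
    have h := congrArg ρ (ClassAux.DqKtinvKt q); rw [map_mul, map_one] at h; exact h
  have rKKt : C * T = T * C := by
    have h := congrArg ρ (ClassAux.DqKKt q); rw [map_mul, map_mul] at h; exact h
  have rEF : A * B = B * A + (q - q⁻¹)⁻¹ • (C - T') := by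
    have h := congrArg ρ (ClassAux.DqEF q)
    rw [map_mul, map_add, map_mul, map_smul, map_sub] at h; exact h
  have invC : ∀ (x : V) (a : k), a ≠ 0 → C x = a • x → C' x = a⁻¹ • x := by
    intro x a ha hx
    have h1 : C' (C x) = x := by rw [← Module.End.mul_apply, rKiK, Module.End.one_apply]
    rw [hx, map_smul] at h1
    calc C' x = (a⁻¹ * a) • C' x := by rw [inv_mul_cancel₀ ha, one_smul]
    _ = a⁻¹ • (a • C' x) := by rw [mul_smul]
    _ = a⁻¹ • x := by rw [h1]
  have invT : ∀ (x : V) (a : k), a ≠ 0 → T x = a • x → T' x = a⁻¹ • x := by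
    intro x a ha hx
    have h1 : T' (T x) = x := by rw [← Module.End.mul_apply, rKtiKt, Module.End.one_apply]
    rw [hx, map_smul] at h1
    calc T' x = (a⁻¹ * a) • T' x := by rw [inv_mul_cancel₀ ha, one_smul]
    _ = a⁻¹ • (a • T' x) := by rw [mul_smul]
    _ = a⁻¹ • x := by rw [h1]
  obtain ⟨μ, ν, v, hv0, hμ0, hν0, hAv, hCv, hTv⟩ :
      ∃ (μ ν : k) (v : V), v ≠ 0 ∧ μ ≠ 0 ∧ ν ≠ 0 ∧ A v = 0 ∧ C v = μ • v ∧ T v = ν • v := by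
    obtain ⟨μ₀, hμ₀⟩ := Module.End.exists_eigenvalue C
    have hTS : ∀ x ∈ C.eigenspace μ₀, T x ∈ C.eigenspace μ₀ := by
      intro x hx
      rw [Module.End.mem_eigenspace_iff] at hx ⊢
      calc C (T x) = (T * C) x := by rw [← rKKt]; rfl
      _ = T (μ₀ • x) := by rw [Module.End.mul_apply, hx]
      _ = μ₀ • T x := map_smul _ _ _
    haveI : Nontrivial (C.eigenspace μ₀) := Submodule.nontrivial_iff_ne_bot.mpr hμ₀
    obtain ⟨ν₀, hν₀⟩ := Module.End.exists_eigenvalue (T.restrict hTS)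
    obtain ⟨u, hu⟩ := hν₀.exists_hasEigenvector
    have hu0 : (u : V) ≠ 0 := fun h => hu.2 (Subtype.ext h)
    have hCu' : C (u : V) = μ₀ • (u : V) := Module.End.mem_eigenspace_iff.mp u.2
    have hTu' : T (u : V) = ν₀ • (u : V) := by
      have h2 := Module.End.mem_eigenspace_iff.mp hu.1
      have h3 := congrArg (Subtype.val) h2
      simpa [LinearMap.restrict_apply] using h3
    obtain ⟨x, hu0, hCu, hTu⟩ : ∃ x : V, x ≠ 0 ∧ C x = μ₀ • x ∧ T x = ν₀ • x :=
      ⟨u, hu0, hCu', hTu'⟩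
    have hμ₀0 : μ₀ ≠ 0 := by
      intro h0
      apply hu0
      have h1 : C' (C x) = x := by
        rw [← Module.End.mul_apply, rKiK, Module.End.one_apply]
      rw [hCu, h0, zero_smul, map_zero] at h1; exact h1.symm
    have hν₀0 : ν₀ ≠ 0 := by
      intro h0
      apply hu0
      have h1 : T' (T x) = x := by
        rw [← Module.End.mul_apply, rKtiKt, Module.End.one_apply]
      rw [hTu, h0, zero_smul, map_zero] at h1; exact h1.symm
    have hex : ∃ j, (A ^ j) x = 0 := ⟨d, by rw [hEd]; rfl⟩
    have hs0 : 0 < Nat.find hex := by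
      rcases Nat.eq_zero_or_pos (Nat.find hex) with h | h
      · exfalso
        have h2 := Nat.find_spec hex
        rw [h, pow_zero, Module.End.one_apply] at h2
        exact hu0 h2
      · exact h
    have hCAj : ∀ j : ℕ, C ((A ^ j) x) = ((q ^ 2) ^ j * μ₀) • (A ^ j) x := by
      intro j; induction j with
      | zero => simpa using hCu
      | succ j ih =>
          calc C ((A ^ (j + 1)) x) = (C * A) ((A ^ j) x) := by
                rw [pow_succ' A j, Module.End.mul_apply, Module.End.mul_apply]
          _ = (q ^ 2) • A (C ((A ^ j) x)) := by rw [rKE]; rfl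
          _ = (q ^ 2) • A (((q ^ 2) ^ j * μ₀) • (A ^ j) x) := by rw [ih]
          _ = ((q ^ 2) ^ (j + 1) * μ₀) • (A ^ (j + 1)) x := by
                rw [map_smul, smul_smul, pow_succ' A j, Module.End.mul_apply]
                congr 1
                ring
    have hTAj : ∀ j : ℕ, T ((A ^ j) x) = ((q ^ 2) ^ j * ν₀) • (A ^ j) x := by
      intro j; induction j with
      | zero => simpa using hTu
      | succ j ih =>
          calc T ((A ^ (j + 1)) x) = (T * A) ((A ^ j) x) := by
                rw [pow_succ' A j, Module.End.mul_apply, Module.End.mul_apply]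
          _ = (q ^ 2) • A (T ((A ^ j) x)) := by rw [rKtE]; rfl
          _ = (q ^ 2) • A (((q ^ 2) ^ j * ν₀) • (A ^ j) x) := by rw [ih]
          _ = ((q ^ 2) ^ (j + 1) * ν₀) • (A ^ (j + 1)) x := by
                rw [map_smul, smul_smul, pow_succ' A j, Module.End.mul_apply]
                congr 1
                ring
    refine ⟨(q ^ 2) ^ (Nat.find hex - 1) * μ₀, (q ^ 2) ^ (Nat.find hex - 1) * ν₀,
      (A ^ (Nat.find hex - 1)) x, Nat.find_min hex (by omega),
      mul_ne_zero (pow_ne_zero _ hq20) hμ₀0, mul_ne_zero (pow_ne_zero _ hq20) hν₀0,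
      ?_, hCAj _, hTAj _⟩
    have h4 : A ((A ^ (Nat.find hex - 1)) x) = (A ^ Nat.find hex) x := by
      conv_rhs => rw [show Nat.find hex = (Nat.find hex - 1) + 1 by omega]
      rw [pow_succ' A _, Module.End.mul_apply]
    rw [h4]; exact Nat.find_spec hex
  set m : ℕ → V := fun i => (B ^ i) v with hm
  have hmB : ∀ i, B (m i) = m (i + 1) := by
    intro i
    show B ((B ^ i) v) = (B ^ (i + 1)) v
    rw [pow_succ' B i, Module.End.mul_apply]
  have hm0 : m 0 = v := by show (B ^ 0) v = v; rw [pow_zero, Module.End.one_apply]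
  have hmC : ∀ i, C (m i) = (μ * ((q ^ 2)⁻¹) ^ i) • m i := by
    intro i; induction i with
    | zero => rw [hm0]; simpa using hCv
    | succ i ih =>
        calc C (m (i + 1)) = (C * B) (m i) := by rw [← hmB, Module.End.mul_apply]
        _ = (q ^ 2)⁻¹ • B (C (m i)) := by rw [rKF]; rfl
        _ = (q ^ 2)⁻¹ • B ((μ * ((q ^ 2)⁻¹) ^ i) • m i) := by rw [ih]
        _ = (μ * ((q ^ 2)⁻¹) ^ (i + 1)) • m (i + 1) := by
            rw [map_smul, smul_smul, hmB]
            congr 1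
            rw [pow_succ]
            ring
  have hmT : ∀ i, T (m i) = (ν * ((q ^ 2)⁻¹) ^ i) • m i := by
    intro i; induction i with
    | zero => rw [hm0]; simpa using hTv
    | succ i ih =>
        calc T (m (i + 1)) = (T * B) (m i) := by rw [← hmB, Module.End.mul_apply]
        _ = (q ^ 2)⁻¹ • B (T (m i)) := by rw [rKtF]; rfl
        _ = (q ^ 2)⁻¹ • B ((ν * ((q ^ 2)⁻¹) ^ i) • m i) := by rw [ih]
        _ = (ν * ((q ^ 2)⁻¹) ^ (i + 1)) • m (i + 1) := by
            rw [map_smul, smul_smul, hmB]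
            congr 1
            rw [pow_succ]
            ring
  have hcoef0 : ∀ (a : k), a ≠ 0 → ∀ i : ℕ, a * ((q ^ 2)⁻¹) ^ i ≠ 0 :=
    fun a ha i => mul_ne_zero ha (pow_ne_zero _ (inv_ne_zero hq20))
  have hmC' : ∀ i, C' (m i) = (μ * ((q ^ 2)⁻¹) ^ i)⁻¹ • m i :=
    fun i => invC _ _ (hcoef0 μ hμ0 i) (hmC i)
  have hmT' : ∀ i, T' (m i) = (ν * ((q ^ 2)⁻¹) ^ i)⁻¹ • m i :=
    fun i => invT _ _ (hcoef0 ν hν0 i) (hmT i)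
  have hmA : ∀ i, A (m i) = ClassAux.cc q μ ν⁻¹ i • m (i - 1) := by
    intro i; induction i with
    | zero => rw [ClassAux.cc_zero, zero_smul, hm0]; exact hAv
    | succ i ih =>
        have hBm : ClassAux.cc q μ ν⁻¹ i • m (i - 1 + 1) = ClassAux.cc q μ ν⁻¹ i • m i := by
          cases i with
          | zero => rw [ClassAux.cc_zero, zero_smul, zero_smul]
          | succ n => rfl
        have hνinv : (ν * ((q ^ 2)⁻¹) ^ i)⁻¹ = ν⁻¹ * (q ^ 2) ^ i := by
          rw [mul_inv, inv_pow, inv_inv]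
        calc A (m (i + 1)) = (A * B) (m i) := by rw [← hmB, Module.End.mul_apply]
        _ = B (A (m i)) + (q - q⁻¹)⁻¹ • (C (m i) - T' (m i)) := by
            rw [rEF, LinearMap.add_apply, Module.End.mul_apply, LinearMap.smul_apply,
              LinearMap.sub_apply]
        _ = ClassAux.cc q μ ν⁻¹ i • m i
            + ((q - q⁻¹)⁻¹ * (μ * ((q ^ 2)⁻¹) ^ i - ν⁻¹ * (q ^ 2) ^ i)) • m i := by
            rw [ih, map_smul, hmB, hBm, hmC, hmT', hνinv, ← sub_smul, smul_smul]
        _ = ClassAux.cc q μ ν⁻¹ (i + 1) • m (i + 1 - 1) := by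
            rw [← add_smul, ClassAux.cc_succ hq0 hqq, Nat.add_sub_cancel]
  have hexB : ∃ i, m i = 0 := ⟨d, by show (B ^ d) v = 0; rw [hFd]; rfl⟩
  obtain ⟨t, ht1, htd, hmt, hmne⟩ :
      ∃ t, 1 ≤ t ∧ t ≤ d ∧ m t = 0 ∧ ∀ i < t, m i ≠ 0 := by
    refine ⟨Nat.find hexB, ?_, Nat.find_le (by show (B ^ d) v = 0; rw [hFd]; rfl),
      Nat.find_spec hexB, fun i hi => Nat.find_min hexB hi⟩
    rcases Nat.eq_zero_or_pos (Nat.find hexB) with h | h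
    · exfalso
      have h2 := Nat.find_spec hexB
      rw [h, hm0] at h2
      exact hv0 h2
    · exact h
  have hinj : Function.Injective (fun i : Fin t => μ * ((q ^ 2)⁻¹) ^ (i : ℕ)) := by
    intro i j hij
    simp only at hij
    have h1 : ((q ^ 2)⁻¹ : k) ^ (i : ℕ) = ((q ^ 2)⁻¹) ^ (j : ℕ) := mul_left_cancel₀ hμ0 hij
    rw [inv_pow, inv_pow] at h1
    have h2 : ((q ^ 2 : k)) ^ (i : ℕ) = (q ^ 2) ^ (j : ℕ) := inv_injective h1
    exact Fin.ext (hq.pow_inj (lt_of_lt_of_le i.isLt htd) (lt_of_lt_of_le j.isLt htd) h2)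
  have hli : LinearIndependent k (fun i : Fin t => m (i : ℕ)) :=
    Module.End.eigenvectors_linearIndependent' C _ hinj _
      (fun i => ⟨Module.End.mem_eigenspace_iff.mpr (hmC (i : ℕ)), hmne (i : ℕ) i.isLt⟩)
  have stab : ∀ (f : Module.End k V) (s : Set V), (∀ y ∈ s, f y ∈ Submodule.span k s) →
      ∀ u ∈ Submodule.span k s, f u ∈ Submodule.span k s := by
    intro f s hf u hu
    induction hu using Submodule.span_induction with
    | mem y hy => exact hf y hy
    | zero => rw [map_zero]; exact Submodule.zero_mem _
    | add y z hy hz ihy ihz => rw [map_add]; exact Submodule.add_mem _ ihy ihz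
    | smul a y hy ih => rw [map_smul]; exact Submodule.smul_mem _ a ih
  have hmemW : ∀ i : ℕ, i < t →
      m i ∈ Submodule.span k (Set.range fun i : Fin t => m (i : ℕ)) :=
    fun i hi => Submodule.subset_span ⟨⟨i, hi⟩, rfl⟩
  have hWinv : ∀ (x : Dq k q), ∀ u ∈ Submodule.span k (Set.range fun i : Fin t => m (i : ℕ)),
      ρ x u ∈ Submodule.span k (Set.range fun i : Fin t => m (i : ℕ)) := by
    apply ClassAux.invariant_of_gen
    · apply stab
      rintro y ⟨i, rfl⟩
      rw [show ρ (DE k q) (m (i:ℕ)) = A (m (i:ℕ)) from rfl, hmA]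
      exact Submodule.smul_mem _ _ (hmemW _ (by omega))
    · apply stab
      rintro y ⟨i, rfl⟩
      rw [show ρ (DF k q) (m (i:ℕ)) = B (m (i:ℕ)) from rfl, hmB]
      by_cases h : (i : ℕ) + 1 < t
      · exact hmemW _ h
      · rw [show (i : ℕ) + 1 = t by omega, hmt]; exact Submodule.zero_mem _
    · apply stab
      rintro y ⟨i, rfl⟩
      rw [show ρ (DK k q) (m (i:ℕ)) = C (m (i:ℕ)) from rfl, hmC]
      exact Submodule.smul_mem _ _ (hmemW _ i.isLt)
    · apply stab
      rintro y ⟨i, rfl⟩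
      rw [show ρ (DKinv k q) (m (i:ℕ)) = C' (m (i:ℕ)) from rfl, hmC']
      exact Submodule.smul_mem _ _ (hmemW _ i.isLt)
    · apply stab
      rintro y ⟨i, rfl⟩
      rw [show ρ (DKt k q) (m (i:ℕ)) = T (m (i:ℕ)) from rfl, hmT]
      exact Submodule.smul_mem _ _ (hmemW _ i.isLt)
    · apply stab
      rintro y ⟨i, rfl⟩
      rw [show ρ (DKtinv k q) (m (i:ℕ)) = T' (m (i:ℕ)) from rfl, hmT']
      exact Submodule.smul_mem _ _ (hmemW _ i.isLt)
  have hWtop : Submodule.span k (Set.range fun i : Fin t => m (i : ℕ)) = ⊤ := by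
    rcases hsimple _ hWinv with h | h
    · exfalso
      exact hmne 0 ht1 ((Submodule.mem_bot k).mp (h ▸ hmemW 0 ht1))
    · exact h
  have hμν_of : t < d → μ * ν = (q ^ 2) ^ (t - 1) := by
    intro htlt
    have h1 : ClassAux.cc q μ ν⁻¹ t • m (t - 1) = 0 := by rw [← hmA t, hmt, map_zero]
    have h2 : ClassAux.cc q μ ν⁻¹ t = 0 := by
      by_contra hne
      rcases smul_eq_zero.mp h1 with h | h
      · exact hne h
      · exact hmne (t - 1) (by omega) h
    unfold ClassAux.cc at h2
    have h3 : qint k q t * (q ^ (1 - (t : ℤ)) * μ - q ^ ((t : ℤ) - 1) * ν⁻¹) = 0 :=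
      (div_eq_zero_iff.mp h2).resolve_right hqq
    have h4 : q ^ (1 - (t : ℤ)) * μ - q ^ ((t : ℤ) - 1) * ν⁻¹ = 0 :=
      (mul_eq_zero.mp h3).resolve_left (ClassAux.qint_ne_zero hq0 hqq hq (by omega) htlt)
    have h5 : q ^ (1 - (t : ℤ)) * μ = q ^ ((t : ℤ) - 1) * ν⁻¹ := sub_eq_zero.mp h4
    have hμeq : μ = q ^ (2 * ((t : ℤ) - 1)) * ν⁻¹ := by
      calc μ = q ^ (-(1 - (t : ℤ))) * (q ^ (1 - (t : ℤ)) * μ) := by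
            rw [← mul_assoc, ← zpow_add₀ hq0, show -(1 - (t : ℤ)) + (1 - (t : ℤ)) = 0 by ring,
              zpow_zero, one_mul]
      _ = q ^ (-(1 - (t : ℤ))) * (q ^ ((t : ℤ) - 1) * ν⁻¹) := by rw [h5]
      _ = q ^ (2 * ((t : ℤ) - 1)) * ν⁻¹ := by
            rw [← mul_assoc, ← zpow_add₀ hq0,
              show -(1 - (t : ℤ)) + ((t : ℤ) - 1) = 2 * ((t : ℤ) - 1) by ring]
    rw [hμeq, mul_assoc, inv_mul_cancel₀ hν0, mul_one, ClassAux.qpow2',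
      show ((t - 1 : ℕ) : ℤ) = (t : ℤ) - 1 by omega]
  by_cases hZcase : (μ * ν) ^ d = 1
  · -- L case
    right
    haveI : NeZero d := ⟨by omega⟩
    obtain ⟨j, hjd, hjμν⟩ := hq.eq_pow_of_pow_eq_one hZcase
    have htj : t = j + 1 := by
      rcases lt_trichotomy t (j + 1) with h | h | h
      · exfalso
        have h1 := hμν_of (by omega)
        have h2 : (q ^ 2 : k) ^ (t - 1) = (q ^ 2) ^ j := by rw [← h1, hjμν]
        have h3 := hq.pow_inj (by omega) hjd h2
        omega
      · exact h
      · exfalso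
        have hμj : μ = (q ^ 2 : k) ^ j * ν⁻¹ := by
          field_simp
          linear_combination -hjμν
        have hccj : ClassAux.cc q μ ν⁻¹ (j + 1) = 0 := by
          unfold ClassAux.cc
          have hnum : q ^ (1 - ((j + 1 : ℕ) : ℤ)) * μ - q ^ (((j + 1 : ℕ) : ℤ) - 1) * ν⁻¹ = 0 := by
            push_cast
            rw [show (1 : ℤ) - ((j : ℤ) + 1) = -(j : ℤ) by ring,
              show ((j : ℤ) + 1) - 1 = (j : ℤ) by ring, hμj, ClassAux.qpow2',
              ← mul_assoc, ← zpow_add₀ hq0, show -(j : ℤ) + 2 * (j : ℤ) = (j : ℤ) by ring,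
              sub_self]
          rw [hnum, mul_zero, zero_div]
        have hmemW2 : ∀ i : ℕ, j + 1 ≤ i → (h2 : i < t) →
            m i ∈ Submodule.span k ((fun i : Fin t => m (i : ℕ)) '' {i : Fin t | j + 1 ≤ (i : ℕ)}) :=
          fun i h1 h2 => Submodule.subset_span ⟨⟨i, h2⟩, h1, rfl⟩
        have hW2inv : ∀ (x : Dq k q), ∀ u ∈ Submodule.span k
              ((fun i : Fin t => m (i : ℕ)) '' {i : Fin t | j + 1 ≤ (i : ℕ)}),
            ρ x u ∈ Submodule.span k
              ((fun i : Fin t => m (i : ℕ)) '' {i : Fin t | j + 1 ≤ (i : ℕ)}) := by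
          apply ClassAux.invariant_of_gen
          · apply stab
            rintro y ⟨i, hiS, rfl⟩
            have hiS' : j + 1 ≤ (i : ℕ) := hiS
            rw [show ρ (DE k q) (m (i:ℕ)) = A (m (i:ℕ)) from rfl, hmA]
            rcases eq_or_lt_of_le hiS' with h' | h'
            · rw [← h', hccj, zero_smul]; exact Submodule.zero_mem _
            · exact Submodule.smul_mem _ _ (hmemW2 _ (by omega) (by omega))
          · apply stab
            rintro y ⟨i, hiS, rfl⟩
            have hiS' : j + 1 ≤ (i : ℕ) := hiS
            rw [show ρ (DF k q) (m (i:ℕ)) = B (m (i:ℕ)) from rfl, hmB]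
            by_cases h' : (i : ℕ) + 1 < t
            · exact hmemW2 _ (by omega) h'
            · rw [show (i : ℕ) + 1 = t by omega, hmt]; exact Submodule.zero_mem _
          · apply stab
            rintro y ⟨i, hiS, rfl⟩
            rw [show ρ (DK k q) (m (i:ℕ)) = C (m (i:ℕ)) from rfl, hmC]
            exact Submodule.smul_mem _ _ (hmemW2 _ hiS i.isLt)
          · apply stab
            rintro y ⟨i, hiS, rfl⟩
            rw [show ρ (DKinv k q) (m (i:ℕ)) = C' (m (i:ℕ)) from rfl, hmC']
            exact Submodule.smul_mem _ _ (hmemW2 _ hiS i.isLt)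
          · apply stab
            rintro y ⟨i, hiS, rfl⟩
            rw [show ρ (DKt k q) (m (i:ℕ)) = T (m (i:ℕ)) from rfl, hmT]
            exact Submodule.smul_mem _ _ (hmemW2 _ hiS i.isLt)
          · apply stab
            rintro y ⟨i, hiS, rfl⟩
            rw [show ρ (DKtinv k q) (m (i:ℕ)) = T' (m (i:ℕ)) from rfl, hmT']
            exact Submodule.smul_mem _ _ (hmemW2 _ hiS i.isLt)
        rcases hsimple _ hW2inv with hbot | htop
        · exact hmne (j + 1) (by omega)
            ((Submodule.mem_bot k).mp (hbot ▸ hmemW2 (j + 1) le_rfl (by omega)))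
        · have h0 : (⟨0, by omega⟩ : Fin t) ∉ {i : Fin t | j + 1 ≤ (i : ℕ)} := by
            simp
          apply hli.notMem_span_image h0
          rw [htop]
          exact Submodule.mem_top
    subst htj
    obtain ⟨w, hwdef⟩ : ∃ w : k, w = μ * q ^ (-(j : ℤ)) := ⟨_, rfl⟩
    have hμν : μ * ν = (q ^ 2 : k) ^ j := hjμν.symm
    have hw0 : w ≠ 0 := by rw [hwdef]; exact mul_ne_zero hμ0 (zpow_ne_zero _ hq0)
    have hw : μ = w * q ^ ((j : ℤ)) := by
      rw [hwdef, mul_assoc, ← zpow_add₀ hq0, show -(j : ℤ) + (j : ℤ) = 0 by ring,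
        zpow_zero, mul_one]
    have hw2 : ν⁻¹ = w * q ^ (-(j : ℤ)) := by
      have h1 : ν⁻¹ = μ * ((q ^ 2 : k) ^ j)⁻¹ := by
        rw [← hμν, mul_inv, ← mul_assoc, mul_inv_cancel₀ hμ0, one_mul]
      rw [h1, ← inv_pow, ClassAux.qpow2_inv hq0, hwdef, mul_assoc, ← zpow_add₀ hq0,
        show -(2 * (j : ℤ)) = -(j:ℤ) + -(j:ℤ) by ring]
    have hwv : ν = w⁻¹ * q ^ ((j : ℤ)) := by
      rw [← inv_inv ν, hw2, mul_inv, ← zpow_neg, neg_neg]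
    have hccL : ∀ i0 : ℕ, i0 ≤ j + 1 →
        ClassAux.cc q μ ν⁻¹ i0 = w * qint k q i0 * qint k q (j + 1 - i0) := by
      intro i0 h
      rw [hw, hw2]
      exact ClassAux.cc_L hq0 w j i0 h
    have hKcoef : ∀ i0 : ℕ, μ * ((q ^ 2)⁻¹) ^ i0 = w * q ^ ((j : ℤ) - 2 * (i0 : ℤ)) := by
      intro i0
      rw [hw, ClassAux.qpow2_inv hq0, mul_assoc, ← zpow_add₀ hq0,
        show (j : ℤ) + -(2 * (i0 : ℤ)) = (j : ℤ) - 2 * (i0 : ℤ) by ring]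
    have hTcoef : ∀ i0 : ℕ, ν * ((q ^ 2)⁻¹) ^ i0 = w⁻¹ * q ^ ((j : ℤ) - 2 * (i0 : ℤ)) := by
      intro i0
      rw [hwv, ClassAux.qpow2_inv hq0, mul_assoc, ← zpow_add₀ hq0,
        show (j : ℤ) + -(2 * (i0 : ℤ)) = (j : ℤ) - 2 * (i0 : ℤ) by ring]
    let b : Module.Basis (Fin (j + 1)) k V := Module.Basis.mk hli (le_of_eq hWtop.symm)
    have hb : ∀ i : Fin (j + 1), b i = m (i : ℕ) := fun i => Module.Basis.mk_apply hli _ i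
    have happ : ∀ (x : Dq k q) (y : Fin (j + 1) →₀ k),
        (((ClassAux.endCongr b.repr).toAlgHom).comp ρ) x y = b.repr (ρ x (b.repr.symm y)) := by
      intro x y
      simp only [AlgHom.comp_apply, AlgEquiv.toAlgHom_eq_coe, AlgHom.coe_coe,
        ClassAux.endCongr_apply]
      exact ClassAux.endCongr_apply b.repr (ρ x) y
    have hsy : ∀ i : Fin (j + 1), b.repr.symm (Finsupp.single i 1) = m (i : ℕ) := by
      intro i
      rw [Module.Basis.repr_symm_single_one, hb]
    have hrep : ∀ (i0 : ℕ) (h : i0 < j + 1),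
        b.repr (m i0) = Finsupp.single (⟨i0, h⟩ : Fin (j + 1)) 1 := by
      intro i0 h
      rw [show m i0 = b ⟨i0, h⟩ from (hb ⟨i0, h⟩).symm, Module.Basis.repr_self]
    refine ⟨w, hw0, j, hjd, ((ClassAux.endCongr b.repr).toAlgHom).comp ρ,
      ⟨?_, ?_, ?_, ?_, ?_, ?_⟩, b.repr, ?_⟩
    · -- E
      refine Finsupp.basisSingleOne.ext fun i => ?_
      rw [Finsupp.coe_basisSingleOne]
      rw [happ, hsy, show ρ (DE k q) (m (i : ℕ)) = A (m (i : ℕ)) from rfl, hmA, map_smul,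
        hrep ((i : ℕ) - 1) (by omega), hccL (i : ℕ) (by omega)]
      by_cases h0 : (i : ℕ) = 0
      · simp [lE, Finsupp.lift_apply, Finsupp.sum_single_index, h0, qint]
      · simp [lE, Finsupp.lift_apply, Finsupp.sum_single_index, h0]
        intro h
        exact (h0 (by simp [h])).elim
    · -- F
      refine Finsupp.basisSingleOne.ext fun i => ?_
      rw [Finsupp.coe_basisSingleOne]
      rw [happ, hsy, show ρ (DF k q) (m (i : ℕ)) = B (m (i : ℕ)) from rfl, hmB]
      by_cases h' : (i : ℕ) + 1 < j + 1
      · have h'' : (i : ℕ) < j := by omega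
        rw [hrep _ h']
        simp [lF, Finsupp.lift_apply, Finsupp.sum_single_index, h'']
      · have h'' : ¬ (i : ℕ) < j := by omega
        rw [show (i : ℕ) + 1 = j + 1 by omega, hmt, map_zero]
        simp [lF, Finsupp.lift_apply, Finsupp.sum_single_index, h'']
    · -- K
      refine Finsupp.basisSingleOne.ext fun i => ?_
      rw [Finsupp.coe_basisSingleOne]
      rw [happ, hsy, show ρ (DK k q) (m (i : ℕ)) = C (m (i : ℕ)) from rfl, hmC, map_smul,
        hrep _ i.isLt, hKcoef]
      simp [lK, Finsupp.lift_apply, Finsupp.sum_single_index]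
    · -- Kinv
      refine Finsupp.basisSingleOne.ext fun i => ?_
      rw [Finsupp.coe_basisSingleOne]
      rw [happ, hsy, show ρ (DKinv k q) (m (i : ℕ)) = C' (m (i : ℕ)) from rfl, hmC', map_smul,
        hrep _ i.isLt, hKcoef]
      simp [lKinv, Finsupp.lift_apply, Finsupp.sum_single_index]
    · -- Kt
      refine Finsupp.basisSingleOne.ext fun i => ?_
      rw [Finsupp.coe_basisSingleOne]
      rw [happ, hsy, show ρ (DKt k q) (m (i : ℕ)) = T (m (i : ℕ)) from rfl, hmT, map_smul,
        hrep _ i.isLt, hTcoef]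
      simp [lKt, Finsupp.lift_apply, Finsupp.sum_single_index]
    · -- Ktinv
      refine Finsupp.basisSingleOne.ext fun i => ?_
      rw [Finsupp.coe_basisSingleOne]
      rw [happ, hsy, show ρ (DKtinv k q) (m (i : ℕ)) = T' (m (i : ℕ)) from rfl, hmT', map_smul,
        hrep _ i.isLt, hTcoef]
      simp [lKtinv, Finsupp.lift_apply, Finsupp.sum_single_index]
    · intro x u
      rw [happ, LinearEquiv.symm_apply_apply]
  · -- Z case
    left
    have htd2 : t = d := by
      rcases eq_or_lt_of_le htd with h | h
      · exact h
      · exfalso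
        apply hZcase
        rw [hμν_of h, ← pow_mul, mul_comm (t - 1) d, pow_mul, hq.pow_eq_one, one_pow]
    have hdt : d = t := htd2.symm
    subst hdt
    obtain ⟨lam, hlam⟩ := IsAlgClosed.exists_pow_nat_eq (μ * ν) (n := 2) (by norm_num)
    have hlam0 : lam ≠ 0 := by
      intro h
      rw [h, zero_pow (two_ne_zero)] at hlam
      exact mul_ne_zero hμ0 hν0 hlam.symm
    have hlam2d : lam ^ (2 * d) ≠ 1 := by rw [pow_mul, hlam]; exact hZcase
    obtain ⟨w, hwdef⟩ : ∃ w : k, w = μ * lam⁻¹ := ⟨_, rfl⟩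
    have hw0 : w ≠ 0 := by rw [hwdef]; exact mul_ne_zero hμ0 (inv_ne_zero hlam0)
    have hwμ : μ = w * lam := by rw [hwdef, mul_assoc, inv_mul_cancel₀ hlam0, mul_one]
    have hwνi : ν⁻¹ = w * lam⁻¹ := by
      have h1 : ν⁻¹ = μ * (lam ^ 2)⁻¹ := by
        rw [hlam, mul_inv, ← mul_assoc, mul_inv_cancel₀ hμ0, one_mul]
      rw [hwdef, h1, sq, mul_inv, ← mul_assoc]
    have hwν : ν = w⁻¹ * lam := by
      rw [← inv_inv ν, hwνi, mul_inv, inv_inv]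
    have hKcoef : ∀ i0 : ℕ, μ * ((q ^ 2)⁻¹) ^ i0 = w * lam * q ^ (-(2 * (i0 : ℤ))) := by
      intro i0
      rw [hwμ, ClassAux.qpow2_inv hq0]
    have hTcoef : ∀ i0 : ℕ, ν * ((q ^ 2)⁻¹) ^ i0 = w⁻¹ * lam * q ^ (-(2 * (i0 : ℤ))) := by
      intro i0
      rw [hwν, ClassAux.qpow2_inv hq0]
    have hEcoef : ∀ i0 : ℕ, ClassAux.cc q μ ν⁻¹ i0 =
        qint k q i0 * w * (lam * q ^ (1 - (i0 : ℤ)) - lam⁻¹ * q ^ ((i0 : ℤ) - 1)) / (q - q⁻¹) := by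
      intro i0
      rw [ClassAux.cc, hwμ, hwνi]
      ring
    let b : Module.Basis (Fin d) k V := Module.Basis.mk hli (le_of_eq hWtop.symm)
    have hb : ∀ i : Fin d, b i = m (i : ℕ) := fun i => Module.Basis.mk_apply hli _ i
    have happ : ∀ (x : Dq k q) (y : Fin d →₀ k),
        (((ClassAux.endCongr b.repr).toAlgHom).comp ρ) x y = b.repr (ρ x (b.repr.symm y)) := by
      intro x y
      simp only [AlgHom.comp_apply, AlgEquiv.toAlgHom_eq_coe, AlgHom.coe_coe,
        ClassAux.endCongr_apply]
      exact ClassAux.endCongr_apply b.repr (ρ x) y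
    have hsy : ∀ i : Fin d, b.repr.symm (Finsupp.single i 1) = m (i : ℕ) := by
      intro i
      rw [Module.Basis.repr_symm_single_one, hb]
    have hrep : ∀ (i0 : ℕ) (h : i0 < d),
        b.repr (m i0) = Finsupp.single (⟨i0, h⟩ : Fin d) 1 := by
      intro i0 h
      rw [show m i0 = b ⟨i0, h⟩ from (hb ⟨i0, h⟩).symm, Module.Basis.repr_self]
    refine ⟨w, lam, hw0, hlam0, hlam2d, ((ClassAux.endCongr b.repr).toAlgHom).comp ρ,
      ⟨?_, ?_, ?_, ?_, ?_, ?_⟩, b.repr, ?_⟩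
    · -- E
      refine Finsupp.basisSingleOne.ext fun i => ?_
      rw [Finsupp.coe_basisSingleOne]
      rw [happ, hsy, show ρ (DE k q) (m (i : ℕ)) = A (m (i : ℕ)) from rfl, hmA, map_smul,
        hrep ((i : ℕ) - 1) (by omega), hEcoef]
      by_cases h0 : (i : ℕ) = 0
      · simp [zE, Finsupp.lift_apply, Finsupp.sum_single_index, h0, qint]
      · simp only [zE, Finsupp.lift_apply]
        rw [Finsupp.sum_single_index (by simp), one_smul, if_neg h0]
    · -- F
      refine Finsupp.basisSingleOne.ext fun i => ?_
      rw [Finsupp.coe_basisSingleOne]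
      rw [happ, hsy, show ρ (DF k q) (m (i : ℕ)) = B (m (i : ℕ)) from rfl, hmB]
      by_cases h' : (i : ℕ) + 1 < d
      · rw [hrep _ h']
        simp [zF, Finsupp.lift_apply, Finsupp.sum_single_index, h']
      · rw [show (i : ℕ) + 1 = d by omega, hmt, map_zero]
        simp [zF, Finsupp.lift_apply, Finsupp.sum_single_index, h']
    · -- K
      refine Finsupp.basisSingleOne.ext fun i => ?_
      rw [Finsupp.coe_basisSingleOne]
      rw [happ, hsy, show ρ (DK k q) (m (i : ℕ)) = C (m (i : ℕ)) from rfl, hmC, map_smul,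
        hrep _ i.isLt, hKcoef]
      simp [zK, Finsupp.lift_apply, Finsupp.sum_single_index]
    · -- Kinv
      refine Finsupp.basisSingleOne.ext fun i => ?_
      rw [Finsupp.coe_basisSingleOne]
      rw [happ, hsy, show ρ (DKinv k q) (m (i : ℕ)) = C' (m (i : ℕ)) from rfl, hmC', map_smul,
        hrep _ i.isLt, hKcoef]
      simp [zKinv, Finsupp.lift_apply, Finsupp.sum_single_index]
    · -- Kt
      refine Finsupp.basisSingleOne.ext fun i => ?_
      rw [Finsupp.coe_basisSingleOne]
      rw [happ, hsy, show ρ (DKt k q) (m (i : ℕ)) = T (m (i : ℕ)) from rfl, hmT, map_smul,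
        hrep _ i.isLt, hTcoef]
      simp [zKt, Finsupp.lift_apply, Finsupp.sum_single_index]
    · -- Ktinv
      refine Finsupp.basisSingleOne.ext fun i => ?_
      rw [Finsupp.coe_basisSingleOne]
      rw [happ, hsy, show ρ (DKtinv k q) (m (i : ℕ)) = T' (m (i : ℕ)) from rfl, hmT', map_smul,
        hrep _ i.isLt, hTcoef]
      simp [zKtinv, Finsupp.lift_apply, Finsupp.sum_single_index]
    · intro x u
      rw [happ, LinearEquiv.symm_apply_apply]
end
end
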